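/- Let n ≥ 2. For I, J ∈ P_n^D, the set {K ∈ P_n^D : I ≤ K and J ≤ K} has a least element, defining a product I ·_D J on P_n^D. With this product there is a bijection F from the monoid presented by generators e_{i,j} (i < j in [±n], j ≠ −i) subject to the relations (PD1) e_{i,j}·e_{i,j} = e_{i,j}; (PD2) e_{i,j}·e_{r,s} = e_{r,s}·e_{i,j}; (PD3) e_{i,j}·e_{j,k} = e_{i,j}·e_{i,k} = e_{i,k}·e_{j,k} for i < j < k in [±n] with j ≠ −i and k ≠ −j; (PD4) e_{i,j} = e_{−j,−i}; (PD5) e_{−i,j}·e_{i,j}·e_{−r,s}·e_{r,s} = e_{−a,b}·e_{a,b}·e_{b,c}·e_{c,d} whenever i < j, r < s, and a < b < c < d are positive with {i, j, r, s} = {a, b, c, d} as sets, onto P_n^D, such that F maps the identity to ⊥, F maps the class of e_{i,j} to ε_{i,j}, and F(x·y) = F(x) ·_D F(y) for all x, y. -/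

import Mathlib

instance setoidCommMonoid (α : Type*) : CommMonoid (Setoid α) where
  mul := (· ⊔ ·)
  one := ⊥
  mul_assoc := sup_assoc
  one_mul := bot_sup_eq
  mul_one := sup_bot_eq
  mul_comm := sup_comm

def muSet {α : Type*} (X : Set α) : Setoid α :=
  Relation.EqvGen.setoid (fun x y => x ∈ X ∧ y ∈ X)

def mu {α : Type*} (i j : α) : Setoid α := muSet {i, j}

/-- `[±n]`: nonzero integers of absolute value at most `n`, with the order from `ℤ`. -/
abbrev PM (n : ℕ) := {k : ℤ // k ≠ 0 ∧ |k| ≤ (n : ℤ)}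

namespace PM

/-- The negation involution `k ↦ -k` on `[±n]`. -/
def neg {n : ℕ} (x : PM n) : PM n :=
  ⟨-x.1, by obtain ⟨h1, h2⟩ := x.2; exact ⟨neg_ne_zero.mpr h1, by rwa [abs_neg]⟩⟩

@[simp] theorem neg_neg {n : ℕ} (x : PM n) : x.neg.neg = x := Subtype.ext (by simp [neg])

theorem neg_lt_neg {n : ℕ} {x y : PM n} (h : x < y) : y.neg < x.neg := by
  have h' : x.1 < y.1 := Subtype.coe_lt_coe.mpr h
  rw [← Subtype.coe_lt_coe]
  show -y.1 < -x.1
  omega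

theorem neg_lt_pos {n : ℕ} {x y : PM n} (hx : 0 < x.1) (hy : 0 < y.1) : x.neg < y := by
  rw [← Subtype.coe_lt_coe]
  show -x.1 < y.1
  omega

theorem pos_ne_neg {n : ℕ} {x y : PM n} (hx : 0 < x.1) (hy : 0 < y.1) : y ≠ x.neg := by
  intro h
  have : y.1 = -x.1 := congrArg Subtype.val h
  omega

theorem neg_lt_self {n : ℕ} {x : PM n} (hx : 0 < x.1) : x.neg < x := neg_lt_pos hx hx

/-- The absolute value map `x ↦ |x|` from `[±n]` to its positive part. -/
def abs {n : ℕ} (x : PM n) : PM n :=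
  ⟨|x.1|, by obtain ⟨h1, h2⟩ := x.2; exact ⟨abs_ne_zero.mpr h1, by rwa [abs_abs]⟩⟩

end PM

/-- Image of a subset of `[±n]` under negation. -/
def negSet {n : ℕ} (K : Set (PM n)) : Set (PM n) := PM.neg '' K

/-- The partition `I⁻` transported along negation: `x ∼ y` in `negPart I` iff `-x ∼ -y` in `I`. -/
def negPart {n : ℕ} (I : Setoid (PM n)) : Setoid (PM n) := Setoid.comap PM.neg I

/-- A set partition `I` of `[±n]` is *signed* if for every block `K` of `I` the set `-K` is
also a block; equivalently, `x ∼ y ↔ -x ∼ -y` for all `x, y`. -/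
def IsSigned {n : ℕ} (I : Setoid (PM n)) : Prop :=
  ∀ x y : PM n, I x y ↔ I (PM.neg x) (PM.neg y)

/-- A *zero block* of a partition `I` is a block `K` with `-K = K`. -/
def IsZeroBlock {n : ℕ} (I : Setoid (PM n)) (K : Set (PM n)) : Prop :=
  K ∈ I.classes ∧ negSet K = K

/-- A `Bₙ`-partition: a signed partition of `[±n]` with at most one zero block. -/
def IsBPart {n : ℕ} (I : Setoid (PM n)) : Prop :=
  IsSigned I ∧ Set.Subsingleton {K | IsZeroBlock I K}

/-- A *restricted* signed partition: all its zero blocks have more than two elements. -/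
def IsRestricted {n : ℕ} (I : Setoid (PM n)) : Prop :=
  IsSigned I ∧ ∀ K : Set (PM n), IsZeroBlock I K → 2 < K.ncard

/-- A `Dₙ`-partition: a `Bₙ`-partition whose zero block (if present) has more than two
elements. -/
def IsDPart {n : ℕ} (I : Setoid (PM n)) : Prop :=
  IsBPart I ∧ ∀ K : Set (PM n), IsZeroBlock I K → 2 < K.ncard

/-- For `i < j` in `[±n]`, the signed partition `ε_{i,j} = μ_{-j,-i} ⊔ μ_{i,j}`. -/
def eps {n : ℕ} (i j : PM n) : Setoid (PM n) := mu (PM.neg j) (PM.neg i) ⊔ mu i j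

theorem PM.neg_injective {n : ℕ} : Function.Injective (PM.neg : PM n → PM n) :=
  Function.LeftInverse.injective PM.neg_neg

theorem PM.neg_ne_neg_neg {n : ℕ} {i j : PM n} (hji : j ≠ PM.neg i) :
    PM.neg i ≠ PM.neg (PM.neg j) := by
  intro h
  apply hji
  rw [PM.neg_injective h, PM.neg_neg]

/-- Generators `e_{i,j}` for `i < j` in `[±n]` with `j ≠ -i`. -/
abbrev DGen (n : ℕ) := {p : PM n × PM n // p.1 < p.2 ∧ p.2 ≠ PM.neg p.1}

open FreeMonoid in
/-- The defining relations (PD1)–(PD5) of the monoid of `Dₙ`-partitions. -/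
inductive DRel (n : ℕ) : FreeMonoid (DGen n) → FreeMonoid (DGen n) → Prop
  /-- (PD1) `e_{i,j} e_{i,j} = e_{i,j}`. -/
  | PD1 (a : DGen n) : DRel n (of a * of a) (of a)
  /-- (PD2) `e_{i,j} e_{r,s} = e_{r,s} e_{i,j}`. -/
  | PD2 (a b : DGen n) : DRel n (of a * of b) (of b * of a)
  /-- (PD3), first equality: `e_{i,j} e_{j,k} = e_{i,j} e_{i,k}` for `i < j < k`,
  `j ≠ -i`, `k ≠ -j` (and `k ≠ -i`, so that `e_{i,k}` is a generator). -/
  | PD3a (i j k : PM n) (hij : i < j) (hjk : j < k)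
      (hji : j ≠ PM.neg i) (hkj : k ≠ PM.neg j) (hki : k ≠ PM.neg i) :
      DRel n (of ⟨(i, j), hij, hji⟩ * of ⟨(j, k), hjk, hkj⟩)
        (of ⟨(i, j), hij, hji⟩ * of ⟨(i, k), hij.trans hjk, hki⟩)
  /-- (PD3), second equality: `e_{i,j} e_{j,k} = e_{i,k} e_{j,k}` for `i < j < k`,
  `j ≠ -i`, `k ≠ -j` (and `k ≠ -i`). -/
  | PD3b (i j k : PM n) (hij : i < j) (hjk : j < k)
      (hji : j ≠ PM.neg i) (hkj : k ≠ PM.neg j) (hki : k ≠ PM.neg i) :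
      DRel n (of ⟨(i, j), hij, hji⟩ * of ⟨(j, k), hjk, hkj⟩)
        (of ⟨(i, k), hij.trans hjk, hki⟩ * of ⟨(j, k), hjk, hkj⟩)
  /-- (PD4) `e_{i,j} = e_{-j,-i}`. -/
  | PD4 (i j : PM n) (hij : i < j) (hji : j ≠ PM.neg i) :
      DRel n (of ⟨(i, j), hij, hji⟩)
        (of ⟨(PM.neg j, PM.neg i), PM.neg_lt_neg hij, PM.neg_ne_neg_neg hji⟩)
  /-- (PD5) `e_{-i,j} e_{i,j} e_{-r,s} e_{r,s} = e_{-a,b} e_{a,b} e_{b,c} e_{c,d}`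
  whenever `i < j`, `r < s` and `a < b < c < d` are positive with
  `{i, j, r, s} = {a, b, c, d}`. -/
  | PD5 (i j r s a b c d : PM n)
      (hi : 0 < i.1) (hj : 0 < j.1) (hr : 0 < r.1) (hs : 0 < s.1)
      (ha : 0 < a.1) (hb : 0 < b.1) (hc : 0 < c.1) (hd : 0 < d.1)
      (hij : i < j) (hrs : r < s) (hab : a < b) (hbc : b < c) (hcd : c < d)
      (hset : ({i, j, r, s} : Set (PM n)) = {a, b, c, d}) :
      DRel n
        (of ⟨(PM.neg i, j), PM.neg_lt_pos hi hj,
            by rw [PM.neg_neg]; exact hij.ne'⟩ *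
          of ⟨(i, j), hij, PM.pos_ne_neg hi hj⟩ *
          of ⟨(PM.neg r, s), PM.neg_lt_pos hr hs,
            by rw [PM.neg_neg]; exact hrs.ne'⟩ *
          of ⟨(r, s), hrs, PM.pos_ne_neg hr hs⟩)
        (of ⟨(PM.neg a, b), PM.neg_lt_pos ha hb,
            by rw [PM.neg_neg]; exact hab.ne'⟩ *
          of ⟨(a, b), hab, PM.pos_ne_neg ha hb⟩ *
          of ⟨(b, c), hbc, PM.pos_ne_neg hb hc⟩ *
          of ⟨(c, d), hcd, PM.pos_ne_neg hc hd⟩)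


/-! ### Stage 1: preliminaries -/

section Stage1

variable {n : ℕ}

theorem pm_neg_ne (x : PM n) : PM.neg x ≠ x := by
  intro h
  have : -x.1 = x.1 := congrArg Subtype.val h
  have := x.2.1
  omega

theorem pm_neg_eq_iff {x y : PM n} : PM.neg x = y ↔ x = PM.neg y := by
  constructor <;> intro h <;> subst h <;> simp

instance : Finite (PM n) := by
  have hm : ∀ x : PM n, x.1 ∈ Set.Icc (-(n:ℤ)) n := by
    intro x
    obtain ⟨h1, h2⟩ := x.2
    rw [abs_le] at h2
    exact h2
  refine Finite.of_injective (fun x : PM n => (⟨x.1, hm x⟩ : Set.Icc (-(n:ℤ)) n)) ?_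
  intro a b h
  apply Subtype.ext
  have := congrArg Subtype.val h
  simpa using this

/-- zero element -/
def ZeroEl (I : Setoid (PM n)) (x : PM n) : Prop := I x (PM.neg x)

/-- zero-connected: all zero elements lie in a single class -/
def IsZC (I : Setoid (PM n)) : Prop := ∀ x y, ZeroEl I x → ZeroEl I y → I x y

theorem signed_rel {I : Setoid (PM n)} (h : IsSigned I) {x y : PM n} (hxy : I x y) :
    I (PM.neg x) (PM.neg y) := (h x y).1 hxy

theorem signed_zero_neg {I : Setoid (PM n)} (h : IsSigned I) {x : PM n} (hx : ZeroEl I x) :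
    ZeroEl I (PM.neg x) := signed_rel h hx

theorem isSigned_bot : IsSigned (⊥ : Setoid (PM n)) := by
  intro x y
  constructor <;> intro h
  · exact congrArg PM.neg h
  · exact PM.neg_injective h

theorem isSigned_sup {I J : Setoid (PM n)} (hI : IsSigned I) (hJ : IsSigned J) :
    IsSigned (I ⊔ J) := by
  have key : ∀ x y, (I ⊔ J) x y → (I ⊔ J) (PM.neg x) (PM.neg y) := by
    intro x y h
    have hle : I ⊔ J ≤ Setoid.comap PM.neg (I ⊔ J) := by
      apply sup_le
      · intro a b hab
        exact le_sup_left (α := Setoid (PM n)) (signed_rel hI hab)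
      · intro a b hab
        exact le_sup_right (α := Setoid (PM n)) (signed_rel hJ hab)
    exact hle h
  intro x y
  constructor
  · exact key x y
  · intro h
    have := key _ _ h
    simpa using this

/-- zero blocks vs zero elements -/
theorem isZeroBlock_class {I : Setoid (PM n)} (hI : IsSigned I) {x : PM n}
    (hx : ZeroEl I x) : IsZeroBlock I {z | I z x} := by
  constructor
  · exact ⟨x, rfl⟩
  · ext z
    simp only [negSet, Set.mem_image, Set.mem_setOf_eq]
    constructor
    · rintro ⟨w, hw, rfl⟩
      have h1 : I (PM.neg w) (PM.neg x) := signed_rel hI hw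
      exact I.trans' h1 (I.symm' hx)
    · intro hz
      refine ⟨PM.neg z, ?_, PM.neg_neg z⟩
      have h1 : I (PM.neg z) (PM.neg x) := signed_rel hI hz
      exact I.trans' h1 (I.symm' hx)

theorem zero_three {I : Setoid (PM n)} (hD : IsDPart I) {x : PM n} (hx : ZeroEl I x) :
    ∃ z, I z x ∧ z ≠ x ∧ z ≠ PM.neg x := by
  have hzb := isZeroBlock_class hD.1.1 hx
  have hcard := hD.2 _ hzb
  by_contra h
  push_neg at h
  have hsub : {z | I z x} ⊆ {x, PM.neg x} := by
    intro z hz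
    rcases eq_or_ne z x with rfl | h1
    · exact Set.mem_insert _ _
    · rcases eq_or_ne z (PM.neg x) with rfl | h2
      · exact Set.mem_insert_of_mem _ rfl
      · exact absurd hz (by intro hc; exact h2 (h z hc h1))
  have : ({z | I z x}).ncard ≤ ({x, PM.neg x} : Set (PM n)).ncard :=
    Set.ncard_le_ncard hsub (Set.toFinite _)
  rw [Set.ncard_pair (Ne.symm (pm_neg_ne x))] at this
  omega

theorem dpart_isZC {I : Setoid (PM n)} (hD : IsDPart I) : IsZC I := by
  intro x y hx hy
  have h1 := isZeroBlock_class hD.1.1 hx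
  have h2 := isZeroBlock_class hD.1.1 hy
  have := hD.1.2 h1 h2
  have hxy : x ∈ {z | I z y} := by rw [← this]; exact I.refl' x
  exact hxy

theorem isDPart_of {I : Setoid (PM n)} (hS : IsSigned I) (hZC : IsZC I)
    (hbig : ∀ x, ZeroEl I x → ∃ z, I z x ∧ z ≠ x ∧ z ≠ PM.neg x) : IsDPart I := by
  have classZero : ∀ K, IsZeroBlock I K → ∃ y, ZeroEl I y ∧ K = {z | I z y} := by
    rintro K ⟨⟨y, rfl⟩, hneg⟩
    refine ⟨y, ?_, rfl⟩
    have : PM.neg y ∈ {z | I z y} := by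
      rw [← hneg]
      exact ⟨y, I.refl' y, rfl⟩
    exact I.symm' this
  refine ⟨⟨hS, ?_⟩, ?_⟩
  · rintro K1 hK1 K2 hK2
    obtain ⟨y1, hy1, rfl⟩ := classZero _ hK1
    obtain ⟨y2, hy2, rfl⟩ := classZero _ hK2
    have h12 : I y1 y2 := hZC _ _ hy1 hy2
    ext z
    exact ⟨fun hz => I.trans' hz h12, fun hz => I.trans' hz (I.symm' h12)⟩
  · rintro K hK
    obtain ⟨y, hy, rfl⟩ := classZero _ hK
    obtain ⟨z, hz, hz1, hz2⟩ := hbig y hy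
    have hsub : {y, PM.neg y, z} ⊆ {w | I w y} := by
      rintro w (rfl | rfl | rfl)
      · exact I.refl' w
      · exact I.symm' hy
      · exact hz
    have h3 : ({y, PM.neg y, z} : Set (PM n)).ncard = 3 := by
      rw [Set.ncard_insert_of_notMem, Set.ncard_pair hz2.symm]
      simp only [Set.mem_insert_iff, Set.mem_singleton_iff]
      push_neg
      exact ⟨Ne.symm (pm_neg_ne y), fun h => hz1 (by rw [← h])⟩
    have := Set.ncard_le_ncard hsub (Set.toFinite _)
    omega

theorem isDPart_bot : IsDPart (⊥ : Setoid (PM n)) := by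
  refine isDPart_of isSigned_bot ?_ ?_
  · intro x y hx hy
    exact absurd hx (fun h => pm_neg_ne x h.symm)
  · intro x hx
    exact absurd hx (fun h => pm_neg_ne x h.symm)

end Stage1

/-! ### Stage 2: the D-closure -/

section Stage2

variable {n : ℕ}

def dCloseRel (I : Setoid (PM n)) (x y : PM n) : Prop :=
  I x y ∨ (ZeroEl I x ∧ ZeroEl I y)

def dClose (I : Setoid (PM n)) : Setoid (PM n) :=
  Relation.EqvGen.setoid (dCloseRel I)

theorem dCloseRel_equivalence {I : Setoid (PM n)} (hI : IsSigned I) :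
    Equivalence (dCloseRel I) := by
  constructor
  · intro x; exact Or.inl (I.refl' x)
  · rintro x y (h | ⟨h1, h2⟩)
    · exact Or.inl (I.symm' h)
    · exact Or.inr ⟨h2, h1⟩
  · rintro x y z (h | ⟨h1, h2⟩) (h' | ⟨h1', h2'⟩)
    · exact Or.inl (I.trans' h h')
    · refine Or.inr ⟨?_, h2'⟩
      exact I.trans' (I.trans' h h1') (I.symm' (signed_rel hI h))
    · refine Or.inr ⟨h1, ?_⟩
      have : I (PM.neg y) (PM.neg z) := signed_rel hI h'
      exact I.trans' (I.trans' (I.symm' h') h2) this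
    · exact Or.inr ⟨h1, h2'⟩

theorem dClose_rel_iff {I : Setoid (PM n)} (hI : IsSigned I) (x y : PM n) :
    dClose I x y ↔ dCloseRel I x y := by
  have : dClose I = Setoid.mk (dCloseRel I) (dCloseRel_equivalence hI) :=
    Setoid.eqvGen_of_setoid (Setoid.mk (dCloseRel I) (dCloseRel_equivalence hI))
  rw [this]
  exact Iff.rfl

theorem le_dClose (I : Setoid (PM n)) : I ≤ dClose I := by
  intro x y h
  exact Relation.EqvGen.rel _ _ (Or.inl h)

theorem dClose_rel_of_zero {I : Setoid (PM n)} {x y : PM n}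
    (hx : ZeroEl I x) (hy : ZeroEl I y) : dClose I x y :=
  Relation.EqvGen.rel _ _ (Or.inr ⟨hx, hy⟩)

theorem dClose_le {I K : Setoid (PM n)} (hK : IsZC K) (h : I ≤ K) : dClose I ≤ K := by
  apply Setoid.eqvGen_le
  rintro x y (hxy | ⟨h1, h2⟩)
  · exact h hxy
  · exact hK x y (h h1) (h h2)

theorem dClose_mono {I J : Setoid (PM n)} (h : I ≤ J) : dClose I ≤ dClose J := by
  apply Setoid.eqvGen_mono
  rintro x y (hxy | ⟨h1, h2⟩)
  · exact Or.inl (h hxy)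
  · exact Or.inr ⟨h h1, h h2⟩

theorem dClose_isSigned {I : Setoid (PM n)} (hI : IsSigned I) : IsSigned (dClose I) := by
  intro x y
  rw [dClose_rel_iff hI, dClose_rel_iff hI]
  constructor
  · rintro (h | ⟨h1, h2⟩)
    · exact Or.inl (signed_rel hI h)
    · exact Or.inr ⟨signed_zero_neg hI h1, signed_zero_neg hI h2⟩
  · rintro (h | ⟨h1, h2⟩)
    · have := signed_rel hI h
      exact Or.inl (by simpa using this)
    · have h1' := signed_zero_neg hI h1
      have h2' := signed_zero_neg hI h2
      rw [PM.neg_neg] at h1' h2'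
      exact Or.inr ⟨h1', h2'⟩

theorem dClose_zeroEl {I : Setoid (PM n)} (hI : IsSigned I) (x : PM n) :
    ZeroEl (dClose I) x ↔ ZeroEl I x := by
  unfold ZeroEl
  rw [dClose_rel_iff hI]
  constructor
  · rintro (h | ⟨h1, h2⟩)
    · exact h
    · exact h1
  · intro h
    exact Or.inl h

theorem dClose_isZC {I : Setoid (PM n)} (hI : IsSigned I) : IsZC (dClose I) := by
  intro x y hx hy
  rw [dClose_zeroEl hI] at hx hy
  exact dClose_rel_of_zero hx hy

theorem dClose_eq_self {I : Setoid (PM n)} (hI : IsSigned I) (hZC : IsZC I) :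
    dClose I = I := by
  apply le_antisymm
  · exact dClose_le hZC le_rfl
  · exact le_dClose I

theorem dClose_idem {I : Setoid (PM n)} (hI : IsSigned I) :
    dClose (dClose I) = dClose I :=
  dClose_eq_self (dClose_isSigned hI) (dClose_isZC hI)

theorem dClose_sup_left {I J : Setoid (PM n)} (hI : IsSigned I) (hJ : IsSigned J) :
    dClose (dClose I ⊔ J) = dClose (I ⊔ J) := by
  apply le_antisymm
  · apply dClose_le (dClose_isZC (isSigned_sup hI hJ))
    apply sup_le
    · exact dClose_le (dClose_isZC (isSigned_sup hI hJ))
        (le_trans le_sup_left (le_dClose _))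
    · exact le_trans le_sup_right (le_dClose _)
  · exact dClose_mono (sup_le (le_trans (le_dClose I) le_sup_left) le_sup_right)

theorem dClose_sup_right {I J : Setoid (PM n)} (hI : IsSigned I) (hJ : IsSigned J) :
    dClose (I ⊔ dClose J) = dClose (I ⊔ J) := by
  rw [sup_comm, dClose_sup_left hJ hI, sup_comm]

/-- the splitting lemma: a join class cannot be split -/
theorem sup_split {α : Type*} (I J : Setoid α) (x y : α) (hxy : (I ⊔ J) x y)
    (hsmall : ∀ z, (I ⊔ J) x z → z = x ∨ z = y) (hne : x ≠ y) : I x y ∨ J x y := by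
  by_contra hc
  push_neg at hc
  obtain ⟨hcI, hcJ⟩ := hc
  set Krel : α → α → Prop := fun a b =>
    (I ⊔ J) a b ∧ ((a = x ∨ a = y) ∨ (b = x ∨ b = y) → a = b) with hKrel
  have hKequiv : Equivalence Krel := by
    constructor
    · intro a
      exact ⟨(I ⊔ J).refl' a, fun _ => rfl⟩
    · rintro a b ⟨h1, h2⟩
      exact ⟨(I ⊔ J).symm' h1, fun h => (h2 (Or.symm h)).symm⟩
    · rintro a b c ⟨h1, h2⟩ ⟨h1', h2'⟩
      refine ⟨(I ⊔ J).trans' h1 h1', ?_⟩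
      rintro (ha | hc2)
      · have hab : a = b := h2 (Or.inl ha)
        subst hab
        exact h2' (Or.inl ha)
      · have hbc : b = c := h2' (Or.inr hc2)
        subst hbc
        exact h2 (Or.inr hc2)
  set K : Setoid α := Setoid.mk Krel hKequiv with hK
  have hsub : ∀ (L : Setoid α), L ≤ I ⊔ J → ¬ L x y → (∀ a b, L a b → Krel a b) := by
    intro L hle hLxy a b hab
    refine ⟨hle hab, ?_⟩
    by_contra hcontra
    push_neg at hcontra
    obtain ⟨hor, hne2⟩ := hcontra
    -- reduce to a or b being x or y with a ≠ b
    rcases hor with (rfl | rfl) | (rfl | rfl)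
    · -- a = x
      rcases hsmall b (hle hab) with rfl | rfl
      · exact hne2 rfl
      · exact hLxy hab
    · -- a = y
      have hxb : (I ⊔ J) x b := (I ⊔ J).trans' hxy (hle hab)
      rcases hsmall b hxb with rfl | rfl
      · exact hLxy (L.symm' hab)
      · exact hne2 rfl
    · -- b = x
      rcases hsmall a ((I ⊔ J).symm' (hle hab)) with rfl | rfl
      · exact hne2 rfl
      · exact hLxy (L.symm' hab)
    · -- b = y
      have hxa : (I ⊔ J) x a := (I ⊔ J).trans' hxy ((I ⊔ J).symm' (hle hab))
      rcases hsmall a hxa with rfl | rfl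
      · exact hLxy hab
      · exact hne2 rfl
  have hIK : I ≤ K := hsub I le_sup_left hcI
  have hJK : J ≤ K := hsub J le_sup_right hcJ
  have : (I ⊔ J) ≤ K := sup_le hIK hJK
  have hxyK : Krel x y := this hxy
  exact hne (hxyK.2 (Or.inl (Or.inl rfl)))

theorem isDPart_dClose_sup {I J : Setoid (PM n)} (hI : IsDPart I) (hJ : IsDPart J) :
    IsDPart (dClose (I ⊔ J)) := by
  have hsgn : IsSigned (I ⊔ J) := isSigned_sup hI.1.1 hJ.1.1
  refine isDPart_of (dClose_isSigned hsgn) (dClose_isZC hsgn) ?_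
  intro x hx
  rw [dClose_zeroEl hsgn] at hx
  by_cases hbig : ∃ z, (I ⊔ J) z x ∧ z ≠ x ∧ z ≠ PM.neg x
  · obtain ⟨z, hz, h1, h2⟩ := hbig
    exact ⟨z, le_dClose _ hz, h1, h2⟩
  · push_neg at hbig
    have hsmall : ∀ z, (I ⊔ J) x z → z = x ∨ z = PM.neg x := by
      intro z hz
      rcases eq_or_ne z x with rfl | h1
      · exact Or.inl rfl
      · rcases eq_or_ne z (PM.neg x) with rfl | h2
        · exact Or.inr rfl
        · exact absurd h2 (by intro hc; exact hc (hbig z ((I ⊔ J).symm' hz) h1))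
    have := sup_split I J x (PM.neg x) hx hsmall (Ne.symm (pm_neg_ne x))
    rcases this with h | h
    · obtain ⟨z, hz, h1, h2⟩ := zero_three hI h
      exact absurd ((le_sup_left : I ≤ I ⊔ J) hz) (by
        intro hc
        rcases hsmall z ((I ⊔ J).symm' hc) with rfl | rfl
        · exact h1 rfl
        · exact h2 rfl)
    · obtain ⟨z, hz, h1, h2⟩ := zero_three hJ h
      exact absurd ((le_sup_right : J ≤ I ⊔ J) hz) (by
        intro hc
        rcases hsmall z ((I ⊔ J).symm' hc) with rfl | rfl
        · exact h1 rfl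
        · exact h2 rfl)

/-- the least common D-coarsening -/
theorem dClose_isLeast {I J : Setoid (PM n)} (hI : IsDPart I) (hJ : IsDPart J) :
    IsLeast {K | IsDPart K ∧ I ≤ K ∧ J ≤ K} (dClose (I ⊔ J)) := by
  constructor
  · exact ⟨isDPart_dClose_sup hI hJ, le_trans le_sup_left (le_dClose _),
      le_trans le_sup_right (le_dClose _)⟩
  · rintro K ⟨hK, h1, h2⟩
    exact dClose_le (dpart_isZC hK) (sup_le h1 h2)

end Stage2

/-! ### Stage 3: the monoid of D-partitions -/

section Stage3

variable {n : ℕ}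

def DPart (n : ℕ) := {I : Setoid (PM n) // IsDPart I}

instance : CommMonoid (DPart n) where
  mul I J := ⟨dClose (I.1 ⊔ J.1), isDPart_dClose_sup I.2 J.2⟩
  one := ⟨⊥, isDPart_bot⟩
  mul_assoc I J K := by
    apply Subtype.ext
    show dClose (dClose (I.1 ⊔ J.1) ⊔ K.1) = dClose (I.1 ⊔ dClose (J.1 ⊔ K.1))
    rw [dClose_sup_left (isSigned_sup I.2.1.1 J.2.1.1) K.2.1.1,
      dClose_sup_right I.2.1.1 (isSigned_sup J.2.1.1 K.2.1.1), sup_assoc]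
  one_mul I := by
    apply Subtype.ext
    show dClose (⊥ ⊔ I.1) = I.1
    rw [bot_sup_eq]
    exact dClose_eq_self I.2.1.1 (dpart_isZC I.2)
  mul_one I := by
    apply Subtype.ext
    show dClose (I.1 ⊔ ⊥) = I.1
    rw [sup_bot_eq]
    exact dClose_eq_self I.2.1.1 (dpart_isZC I.2)
  mul_comm I J := by
    apply Subtype.ext
    show dClose (I.1 ⊔ J.1) = dClose (J.1 ⊔ I.1)
    rw [sup_comm]

theorem dpart_mul_val (I J : DPart n) : (I * J).1 = dClose (I.1 ⊔ J.1) := rfl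

theorem dpart_one_val : (1 : DPart n).1 = ⊥ := rfl

theorem dpart_mul_of_le {I J : DPart n} (h : I.1 ≤ J.1) : I * J = J := by
  apply Subtype.ext
  rw [dpart_mul_val, sup_eq_right.mpr h]
  exact dClose_eq_self J.2.1.1 (dpart_isZC J.2)

end Stage3

/-! ### Stage 4: `muSet` and `eps` computations -/

section Stage4

variable {n : ℕ} {α : Type*}

theorem muSet_rel {X : Set α} {x y : α} :
    muSet X x y ↔ x = y ∨ (x ∈ X ∧ y ∈ X) := by
  constructor
  · intro h
    induction h with
    | rel a b hab => exact Or.inr hab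
    | refl a => exact Or.inl rfl
    | symm a b _ ih => rcases ih with rfl | ⟨h1, h2⟩; exacts [Or.inl rfl, Or.inr ⟨h2, h1⟩]
    | trans a b c _ _ ih1 ih2 =>
      rcases ih1 with rfl | ⟨h1, h2⟩
      · exact ih2
      · rcases ih2 with rfl | ⟨h3, h4⟩
        · exact Or.inr ⟨h1, h2⟩
        · exact Or.inr ⟨h1, h4⟩
  · rintro (rfl | ⟨h1, h2⟩)
    · exact (muSet X).refl' x
    · exact Relation.EqvGen.rel _ _ ⟨h1, h2⟩

theorem muSet_rel_of_mem {X : Set α} {x y : α} (hx : x ∈ X) (hy : y ∈ X) :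
    muSet X x y := Relation.EqvGen.rel _ _ ⟨hx, hy⟩

theorem muSet_le {X : Set α} {K : Setoid α} (h : ∀ x ∈ X, ∀ y ∈ X, K x y) :
    muSet X ≤ K := Setoid.eqvGen_le (fun x y ⟨hx, hy⟩ => h x hx y hy)

theorem muSet_mono {X Y : Set α} (h : X ⊆ Y) : muSet X ≤ muSet Y :=
  Setoid.eqvGen_mono (fun _ _ ⟨hx, hy⟩ => ⟨h hx, h hy⟩)

theorem muSet_sup_inter {X Y : Set α} (h : (X ∩ Y).Nonempty) :
    muSet X ⊔ muSet Y = muSet (X ∪ Y) := by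
  obtain ⟨c, hcX, hcY⟩ := h
  apply le_antisymm
  · exact sup_le (muSet_mono Set.subset_union_left) (muSet_mono Set.subset_union_right)
  · apply muSet_le
    intro x hx y hy
    have hXle : muSet X ≤ muSet X ⊔ muSet Y := le_sup_left
    have hYle : muSet Y ≤ muSet X ⊔ muSet Y := le_sup_right
    have hxc : (muSet X ⊔ muSet Y) x c := by
      rcases hx with hx | hx
      · exact hXle (muSet_rel_of_mem hx hcX)
      · exact hYle (muSet_rel_of_mem hx hcY)
    have hyc : (muSet X ⊔ muSet Y) y c := by
      rcases hy with hy | hy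
      · exact hXle (muSet_rel_of_mem hy hcX)
      · exact hYle (muSet_rel_of_mem hy hcY)
    exact (muSet X ⊔ muSet Y).trans' hxc ((muSet X ⊔ muSet Y).symm' hyc)

theorem mu_eq_muSet (i j : α) : mu i j = muSet {i, j} := rfl

/-- `eps i j` as supremum of two muSets -/
theorem eps_def' (i j : PM n) :
    eps i j = muSet {PM.neg j, PM.neg i} ⊔ muSet ({i, j} : Set (PM n)) := rfl

theorem negSet_pair (i j : PM n) :
    negSet ({i, j} : Set (PM n)) = {PM.neg i, PM.neg j} := by
  unfold negSet
  rw [Set.image_insert_eq, Set.image_singleton]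

theorem isSigned_muSet {W : Set (PM n)} (hW : negSet W = W) : IsSigned (muSet W) := by
  have hmem : ∀ x : PM n, x ∈ W ↔ PM.neg x ∈ W := by
    intro x
    constructor
    · intro hx
      rw [← hW]
      exact ⟨x, hx, rfl⟩
    · intro hx
      rw [← hW] at hx
      obtain ⟨w, hw, hwx⟩ := hx
      have : w = x := by
        have := congrArg PM.neg hwx
        simpa using this
      rwa [← this]
  intro x y
  rw [muSet_rel, muSet_rel]
  constructor
  · rintro (rfl | ⟨h1, h2⟩)
    · exact Or.inl rfl
    · exact Or.inr ⟨(hmem x).1 h1, (hmem y).1 h2⟩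
  · rintro (h | ⟨h1, h2⟩)
    · exact Or.inl (PM.neg_injective h)
    · exact Or.inr ⟨(hmem x).2 h1, (hmem y).2 h2⟩

theorem isZC_muSet {W : Set (PM n)} (hW : negSet W = W) : IsZC (muSet W) := by
  intro x y hx hy
  rw [ZeroEl, muSet_rel] at hx hy
  rcases hx with hx | ⟨hx, _⟩
  · exact absurd hx.symm (pm_neg_ne x)
  · rcases hy with hy | ⟨hy, _⟩
    · exact absurd hy.symm (pm_neg_ne y)
    · exact muSet_rel_of_mem hx hy

theorem dClose_muSet {W : Set (PM n)} (hW : negSet W = W) : dClose (muSet W) = muSet W :=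
  dClose_eq_self (isSigned_muSet hW) (isZC_muSet hW)

theorem negSet_union {A B : Set (PM n)} : negSet (A ∪ B) = negSet A ∪ negSet B :=
  Set.image_union _ _ _

theorem dClose_muSet_sup {A B : Set (PM n)} (hA : negSet A = A) (hB : negSet B = B)
    (hAne : A.Nonempty) (hBne : B.Nonempty) :
    dClose (muSet A ⊔ muSet B) = muSet (A ∪ B) := by
  have hmemA : ∀ x : PM n, x ∈ A → PM.neg x ∈ A := by
    intro x hx; rw [← hA]; exact ⟨x, hx, rfl⟩
  have hmemB : ∀ x : PM n, x ∈ B → PM.neg x ∈ B := by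
    intro x hx; rw [← hB]; exact ⟨x, hx, rfl⟩
  apply le_antisymm
  · apply dClose_le (isZC_muSet (by rw [negSet_union, hA, hB]))
    exact sup_le (muSet_mono Set.subset_union_left) (muSet_mono Set.subset_union_right)
  · apply muSet_le
    intro x hx y hy
    have hzero : ∀ z : PM n, z ∈ A ∪ B → ZeroEl (muSet A ⊔ muSet B) z := by
      rintro z (hz | hz)
      · exact (le_sup_left : muSet A ≤ _) (muSet_rel_of_mem hz (hmemA z hz))
      · exact (le_sup_right : muSet B ≤ _) (muSet_rel_of_mem hz (hmemB z hz))
    exact dClose_rel_of_zero (hzero x hx) (hzero y hy)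

theorem isSigned_of_forall {I : Setoid (PM n)}
    (h : ∀ x y, I x y → I (PM.neg x) (PM.neg y)) : IsSigned I := by
  intro x y
  constructor
  · exact h x y
  · intro h'
    have := h _ _ h'
    simpa using this

theorem isSigned_eps (i j : PM n) : IsSigned (eps i j) := by
  apply isSigned_of_forall
  intro x y hxy
  have hle : eps i j ≤ Setoid.comap PM.neg (eps i j) := by
    rw [eps_def']
    apply sup_le
    · apply muSet_le
      intro a ha b hb
      show eps i j (PM.neg a) (PM.neg b)
      have hmem : ∀ c : PM n, c ∈ ({PM.neg j, PM.neg i} : Set (PM n)) →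
          PM.neg c ∈ ({i, j} : Set (PM n)) := by
        rintro c (rfl | rfl) <;> simp
      exact (le_sup_right : muSet ({i, j} : Set (PM n)) ≤ eps i j)
        (muSet_rel_of_mem (hmem a ha) (hmem b hb))
    · apply muSet_le
      intro a ha b hb
      show eps i j (PM.neg a) (PM.neg b)
      have hmem : ∀ c : PM n, c ∈ ({i, j} : Set (PM n)) →
          PM.neg c ∈ ({PM.neg j, PM.neg i} : Set (PM n)) := by
        rintro c (rfl | rfl) <;> simp
      exact (le_sup_left : muSet ({PM.neg j, PM.neg i} : Set (PM n)) ≤ eps i j)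
        (muSet_rel_of_mem (hmem a ha) (hmem b hb))
  exact hle hxy

end Stage4

/-! ### Stage 5: eps is a D-partition -/

section Stage5

variable {n : ℕ} {α : Type*}

theorem muSet_sup_disjoint_rel {A B : Set α} (h : ∀ x, x ∈ A → x ∈ B → False) (x y : α) :
    (muSet A ⊔ muSet B) x y ↔ x = y ∨ (x ∈ A ∧ y ∈ A) ∨ (x ∈ B ∧ y ∈ B) := by
  set r : α → α → Prop := fun x y => x = y ∨ (x ∈ A ∧ y ∈ A) ∨ (x ∈ B ∧ y ∈ B) with hr
  have hequiv : Equivalence r := by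
    constructor
    · intro a; exact Or.inl rfl
    · rintro a b (rfl | ⟨h1, h2⟩ | ⟨h1, h2⟩)
      exacts [Or.inl rfl, Or.inr (Or.inl ⟨h2, h1⟩), Or.inr (Or.inr ⟨h2, h1⟩)]
    · rintro a b c (rfl | ⟨h1, h2⟩ | ⟨h1, h2⟩) hbc
      · exact hbc
      · rcases hbc with rfl | ⟨h3, h4⟩ | ⟨h3, h4⟩
        · exact Or.inr (Or.inl ⟨h1, h2⟩)
        · exact Or.inr (Or.inl ⟨h1, h4⟩)
        · exact absurd h2 (fun hc => h b hc h3)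
      · rcases hbc with rfl | ⟨h3, h4⟩ | ⟨h3, h4⟩
        · exact Or.inr (Or.inr ⟨h1, h2⟩)
        · exact absurd h3 (fun hc => h b hc h2)
        · exact Or.inr (Or.inr ⟨h1, h4⟩)
  have : muSet A ⊔ muSet B = Setoid.mk r hequiv := by
    apply le_antisymm
    · apply sup_le
      · apply muSet_le
        intro a ha b hb
        exact Or.inr (Or.inl ⟨ha, hb⟩)
      · apply muSet_le
        intro a ha b hb
        exact Or.inr (Or.inr ⟨ha, hb⟩)
    · rintro a b (rfl | ⟨h1, h2⟩ | ⟨h1, h2⟩)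
      · exact (muSet A ⊔ muSet B).refl' a
      · exact (le_sup_left : muSet A ≤ _) (muSet_rel_of_mem h1 h2)
      · exact (le_sup_right : muSet B ≤ _) (muSet_rel_of_mem h1 h2)
  rw [this]
  exact Iff.rfl

theorem pm_eq_iff {x y : PM n} : x = y ↔ x.1 = y.1 := Subtype.ext_iff

@[simp] theorem pm_neg_val (x : PM n) : (PM.neg x).1 = -x.1 := rfl

theorem eps_pair_disjoint {i j : PM n} (hji : j ≠ PM.neg i) :
    ∀ x : PM n, x ∈ ({PM.neg j, PM.neg i} : Set (PM n)) → x ∈ ({i, j} : Set (PM n)) → False := by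
  intro x h1 h2
  simp only [Set.mem_insert_iff, Set.mem_singleton_iff] at h1 h2
  have hji' : j.1 ≠ -i.1 := fun hc => hji (pm_eq_iff.mpr (by simpa using hc))
  have hi0 := i.2.1
  have hj0 := j.2.1
  rcases h1 with rfl | rfl <;> rcases h2 with h2 | h2 <;>
    rw [pm_eq_iff] at h2 <;> simp only [pm_neg_val] at h2 <;> omega

theorem eps_rel {i j : PM n} (hji : j ≠ PM.neg i) (x y : PM n) :
    eps i j x y ↔ x = y ∨ (x ∈ ({PM.neg j, PM.neg i} : Set (PM n)) ∧
      y ∈ ({PM.neg j, PM.neg i} : Set (PM n))) ∨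
      (x ∈ ({i, j} : Set (PM n)) ∧ y ∈ ({i, j} : Set (PM n))) := by
  rw [eps_def']
  exact muSet_sup_disjoint_rel (eps_pair_disjoint hji) x y

theorem eps_no_zero {i j : PM n} (hji : j ≠ PM.neg i) (x : PM n) :
    ¬ ZeroEl (eps i j) x := by
  intro h
  rw [ZeroEl, eps_rel hji] at h
  have hji' : j.1 ≠ -i.1 := fun hc => hji (pm_eq_iff.mpr (by simpa using hc))
  have hi0 := i.2.1
  have hj0 := j.2.1
  have hx0 := x.2.1
  rcases h with h | ⟨h1, h2⟩ | ⟨h1, h2⟩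
  · rw [pm_eq_iff] at h; simp only [pm_neg_val] at h; omega
  all_goals (
    simp only [Set.mem_insert_iff, Set.mem_singleton_iff] at h1 h2;
    rcases h1 with h1 | h1 <;> rcases h2 with h2 | h2 <;>
      rw [pm_eq_iff] at h1 h2 <;> simp only [pm_neg_val] at h1 h2 <;> omega)

theorem isDPart_eps {i j : PM n} (hji : j ≠ PM.neg i) : IsDPart (eps i j) := by
  refine isDPart_of (isSigned_eps i j) ?_ ?_
  · intro x y hx _
    exact absurd hx (eps_no_zero hji x)
  · intro x hx
    exact absurd hx (eps_no_zero hji x)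

/-- the generator map into `DPart n` -/
def toD (g : DGen n) : DPart n := ⟨eps g.1.1 g.1.2, isDPart_eps g.2.2⟩

end Stage5

/-! ### Stage 6: verification of the relations in `DPart` -/

section Stage6

variable {n : ℕ}

@[simp] theorem pm_neg_inj {x y : PM n} : PM.neg x = PM.neg y ↔ x = y :=
  ⟨fun h => PM.neg_injective h, fun h => h ▸ rfl⟩

theorem pm_eq_neg_iff {x y : PM n} : x = PM.neg y ↔ PM.neg x = y := by
  constructor <;> intro h <;> subst h <;> simp

theorem mem_negSet {A : Set (PM n)} {x : PM n} : x ∈ negSet A ↔ PM.neg x ∈ A := by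
  constructor
  · rintro ⟨w, hw, rfl⟩
    simpa using hw
  · intro h
    exact ⟨PM.neg x, h, by simp⟩

theorem eps_isZC (i j : PM n) (hji : j ≠ PM.neg i) : IsZC (eps i j) := by
  intro x y hx _
  exact absurd hx (eps_no_zero hji x)

theorem toD_idem (a : DGen n) : toD a * toD a = toD a := by
  apply Subtype.ext
  rw [dpart_mul_val]
  show dClose (eps a.1.1 a.1.2 ⊔ eps a.1.1 a.1.2) = eps a.1.1 a.1.2
  rw [sup_idem]
  exact dClose_eq_self (isSigned_eps _ _) (eps_isZC _ _ a.2.2)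

theorem eps_sup_eps (p q r s : PM n)
    (h1 : (({PM.neg q, PM.neg p} : Set (PM n)) ∩ {PM.neg s, PM.neg r}).Nonempty)
    (h2 : (({p, q} : Set (PM n)) ∩ {r, s}).Nonempty) :
    eps p q ⊔ eps r s =
      muSet (({PM.neg q, PM.neg p} : Set (PM n)) ∪ {PM.neg s, PM.neg r}) ⊔
      muSet (({p, q} : Set (PM n)) ∪ {r, s}) := by
  rw [eps_def', eps_def', sup_sup_sup_comm, muSet_sup_inter h1, muSet_sup_inter h2]

theorem toD_PD3a (i j k : PM n) (hij : i < j) (hjk : j < k)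
    (hji : j ≠ PM.neg i) (hkj : k ≠ PM.neg j) (hki : k ≠ PM.neg i) :
    toD ⟨(i, j), hij, hji⟩ * toD ⟨(j, k), hjk, hkj⟩ =
      toD ⟨(i, j), hij, hji⟩ * toD ⟨(i, k), hij.trans hjk, hki⟩ := by
  apply Subtype.ext
  rw [dpart_mul_val, dpart_mul_val]
  show dClose (eps i j ⊔ eps j k) = dClose (eps i j ⊔ eps i k)
  congr 1
  rw [eps_sup_eps i j j k ⟨PM.neg j, by simp⟩ ⟨j, by simp⟩,
    eps_sup_eps i j i k ⟨PM.neg i, by simp⟩ ⟨i, by simp⟩]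
  congr 1 <;> · congr 1; ext z; simp only [Set.mem_union, Set.mem_insert_iff,
    Set.mem_singleton_iff]; tauto

theorem toD_PD3b (i j k : PM n) (hij : i < j) (hjk : j < k)
    (hji : j ≠ PM.neg i) (hkj : k ≠ PM.neg j) (hki : k ≠ PM.neg i) :
    toD ⟨(i, j), hij, hji⟩ * toD ⟨(j, k), hjk, hkj⟩ =
      toD ⟨(i, k), hij.trans hjk, hki⟩ * toD ⟨(j, k), hjk, hkj⟩ := by
  apply Subtype.ext
  rw [dpart_mul_val, dpart_mul_val]
  show dClose (eps i j ⊔ eps j k) = dClose (eps i k ⊔ eps j k)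
  congr 1
  rw [eps_sup_eps i j j k ⟨PM.neg j, by simp⟩ ⟨j, by simp⟩,
    eps_sup_eps i k j k ⟨PM.neg k, by simp⟩ ⟨k, by simp⟩]
  congr 1 <;> · congr 1; ext z; simp only [Set.mem_union, Set.mem_insert_iff,
    Set.mem_singleton_iff]; tauto

theorem eps_dual (i j : PM n) : eps i j = eps (PM.neg j) (PM.neg i) := by
  rw [eps_def', eps_def', PM.neg_neg, PM.neg_neg, sup_comm]

theorem toD_PD4 (i j : PM n) (hij : i < j) (hji : j ≠ PM.neg i) :
    toD ⟨(i, j), hij, hji⟩ =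
      toD ⟨(PM.neg j, PM.neg i), PM.neg_lt_neg hij, PM.neg_ne_neg_neg hji⟩ := by
  apply Subtype.ext
  exact eps_dual i j

/-- the quadruple `{±p, ±q}` -/
theorem eps_quad (p q : PM n) :
    eps (PM.neg p) q ⊔ eps p q = muSet {PM.neg q, PM.neg p, p, q} := by
  rw [eps_def', eps_def', PM.neg_neg, sup_sup_sup_comm,
    muSet_sup_inter ⟨PM.neg q, by simp⟩, muSet_sup_inter ⟨q, by simp⟩,
    muSet_sup_inter ⟨p, by simp⟩]
  congr 1
  ext z
  simp only [Set.mem_union, Set.mem_insert_iff, Set.mem_singleton_iff]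
  tauto

theorem negSet_quad (p q : PM n) :
    negSet ({PM.neg q, PM.neg p, p, q} : Set (PM n)) = {PM.neg q, PM.neg p, p, q} := by
  ext z
  simp only [mem_negSet, Set.mem_insert_iff, Set.mem_singleton_iff, pm_eq_iff, pm_neg_val]
  omega

theorem dpart_prod3_val (a b c : DPart n) :
    (a * b * c).1 = dClose ((a.1 ⊔ b.1) ⊔ c.1) := by
  rw [dpart_mul_val, dpart_mul_val]
  exact dClose_sup_left (isSigned_sup a.2.1.1 b.2.1.1) c.2.1.1

theorem dpart_prod4_val (a b c d : DPart n) :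
    (a * b * c * d).1 = dClose (((a.1 ⊔ b.1) ⊔ c.1) ⊔ d.1) := by
  rw [dpart_mul_val, dpart_prod3_val]
  rw [dClose_sup_left (isSigned_sup (isSigned_sup a.2.1.1 b.2.1.1) c.2.1.1) d.2.1.1]

theorem quad_union (p q r s : PM n) :
    (({PM.neg q, PM.neg p, p, q} : Set (PM n)) ∪ {PM.neg s, PM.neg r, r, s}) =
      {x | x ∈ ({p, q, r, s} : Set (PM n)) ∨ PM.neg x ∈ ({p, q, r, s} : Set (PM n))} := by
  ext z
  simp only [Set.mem_union, Set.mem_insert_iff, Set.mem_singleton_iff, Set.mem_setOf_eq,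
    pm_eq_iff, pm_neg_val]
  omega

theorem big_union (a b c d : PM n) :
    (((({PM.neg b, PM.neg a, a, b} : Set (PM n)) ∪ {PM.neg c, PM.neg b}) ∪ {b, c}) ∪
        {PM.neg d, PM.neg c}) ∪ {c, d} =
      {x | x ∈ ({a, b, c, d} : Set (PM n)) ∨ PM.neg x ∈ ({a, b, c, d} : Set (PM n))} := by
  ext z
  simp only [Set.mem_union, Set.mem_insert_iff, Set.mem_singleton_iff, Set.mem_setOf_eq,
    pm_eq_iff, pm_neg_val]
  omega

theorem negSet_symmSet (S : Set (PM n)) :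
    negSet {x | x ∈ S ∨ PM.neg x ∈ S} = {x | x ∈ S ∨ PM.neg x ∈ S} := by
  ext z
  simp only [mem_negSet, Set.mem_setOf_eq, PM.neg_neg]
  tauto

theorem toD_PD5 (i j r s a b c d : PM n)
    (hi : 0 < i.1) (hj : 0 < j.1) (hr : 0 < r.1) (hs : 0 < s.1)
    (ha : 0 < a.1) (hb : 0 < b.1) (hc : 0 < c.1) (hd : 0 < d.1)
    (hij : i < j) (hrs : r < s) (hab : a < b) (hbc : b < c) (hcd : c < d)
    (hset : ({i, j, r, s} : Set (PM n)) = {a, b, c, d}) :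
    toD ⟨(PM.neg i, j), PM.neg_lt_pos hi hj, by rw [PM.neg_neg]; exact hij.ne'⟩ *
      toD ⟨(i, j), hij, PM.pos_ne_neg hi hj⟩ *
      toD ⟨(PM.neg r, s), PM.neg_lt_pos hr hs, by rw [PM.neg_neg]; exact hrs.ne'⟩ *
      toD ⟨(r, s), hrs, PM.pos_ne_neg hr hs⟩ =
    toD ⟨(PM.neg a, b), PM.neg_lt_pos ha hb, by rw [PM.neg_neg]; exact hab.ne'⟩ *
      toD ⟨(a, b), hab, PM.pos_ne_neg ha hb⟩ *
      toD ⟨(b, c), hbc, PM.pos_ne_neg hb hc⟩ *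
      toD ⟨(c, d), hcd, PM.pos_ne_neg hc hd⟩ := by
  apply Subtype.ext
  rw [dpart_prod4_val, dpart_prod4_val]
  show dClose (((eps (PM.neg i) j ⊔ eps i j) ⊔ eps (PM.neg r) s) ⊔ eps r s) =
    dClose (((eps (PM.neg a) b ⊔ eps a b) ⊔ eps b c) ⊔ eps c d)
  rw [sup_assoc, eps_quad i j, eps_quad r s,
    dClose_muSet_sup (negSet_quad i j) (negSet_quad r s) ⟨PM.neg j, by simp⟩
      ⟨PM.neg s, by simp⟩, quad_union]
  rw [eps_quad a b, eps_def' b c, eps_def' c d,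
    ← sup_assoc (muSet {PM.neg b, PM.neg a, a, b}),
    muSet_sup_inter (show ((({PM.neg b, PM.neg a, a, b} : Set (PM n)) ∩
      {PM.neg c, PM.neg b}).Nonempty) from ⟨PM.neg b, by simp⟩),
    muSet_sup_inter ⟨b, by simp⟩, ← sup_assoc,
    muSet_sup_inter ⟨PM.neg c, by simp⟩, muSet_sup_inter ⟨c, by simp⟩,
    big_union, dClose_muSet (negSet_symmSet _), hset]

/-! ### Stage 7: the lift homomorphism -/

theorem drel_liftD (a b : FreeMonoid (DGen n)) (h : DRel n a b) :
    FreeMonoid.lift toD a = FreeMonoid.lift toD b := by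
  cases h with
  | PD1 a => simp only [map_mul, FreeMonoid.lift_eval_of]; exact toD_idem a
  | PD2 a b => simp only [map_mul, FreeMonoid.lift_eval_of]; exact mul_comm _ _
  | PD3a i j k hij hjk hji hkj hki =>
    simp only [map_mul, FreeMonoid.lift_eval_of]; exact toD_PD3a i j k hij hjk hji hkj hki
  | PD3b i j k hij hjk hji hkj hki =>
    simp only [map_mul, FreeMonoid.lift_eval_of]; exact toD_PD3b i j k hij hjk hji hkj hki
  | PD4 i j hij hji =>
    simp only [FreeMonoid.lift_eval_of]; exact toD_PD4 i j hij hji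
  | PD5 i j r s a b c d hi hj hr hs ha hb hc hd hij hrs hab hbc hcd hset =>
    simp only [map_mul, FreeMonoid.lift_eval_of]
    exact toD_PD5 i j r s a b c d hi hj hr hs ha hb hc hd hij hrs hab hbc hcd hset

/-- the lifted monoid homomorphism -/
def liftD : PresentedMonoid (DRel n) →* DPart n :=
  PresentedMonoid.lift toD drel_liftD

theorem liftD_of (a : DGen n) : liftD (PresentedMonoid.of (DRel n) a) = toD a := rfl

/-- equality in the presented monoid from a relation -/
theorem pm_rel_eq {a b : FreeMonoid (DGen n)} (h : DRel n a b) :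
    PresentedMonoid.mk (DRel n) a = PresentedMonoid.mk (DRel n) b :=
  Quot.sound (ConGen.Rel.of a b h)

theorem pm_of_mul_of (a b : DGen n) :
    PresentedMonoid.of (DRel n) a * PresentedMonoid.of (DRel n) b =
      PresentedMonoid.mk (DRel n) (FreeMonoid.of a * FreeMonoid.of b) := rfl

/-- generators commute -/
theorem pm_gen_comm (a b : DGen n) :
    PresentedMonoid.of (DRel n) a * PresentedMonoid.of (DRel n) b =
      PresentedMonoid.of (DRel n) b * PresentedMonoid.of (DRel n) a :=
  pm_rel_eq (DRel.PD2 a b)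

theorem pm_gen_idem (a : DGen n) :
    PresentedMonoid.of (DRel n) a * PresentedMonoid.of (DRel n) a =
      PresentedMonoid.of (DRel n) a :=
  pm_rel_eq (DRel.PD1 a)

theorem pm_gen_mul_comm (a : DGen n) (x : PresentedMonoid (DRel n)) :
    PresentedMonoid.of (DRel n) a * x = x * PresentedMonoid.of (DRel n) a := by
  induction x using PresentedMonoid.inductionOn with
  | h w =>
    induction w using FreeMonoid.inductionOn' with
    | one => rw [map_one, mul_one, one_mul]
    | of_mul b w ih =>
      rw [map_mul,
        show (PresentedMonoid.mk (DRel n)) (FreeMonoid.of b) = PresentedMonoid.of (DRel n) b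
          from rfl,
        ← mul_assoc, pm_gen_comm a b, mul_assoc, ih, ← mul_assoc]

instance : CommMonoid (PresentedMonoid (DRel n)) :=
  { (inferInstance : Monoid (PresentedMonoid (DRel n))) with
    mul_comm := by
      intro x y
      induction x using PresentedMonoid.inductionOn with
      | h w =>
        induction w using FreeMonoid.inductionOn' with
        | one => rw [map_one, mul_one, one_mul]
        | of_mul a w ih =>
          rw [map_mul,
            show (PresentedMonoid.mk (DRel n)) (FreeMonoid.of a) = PresentedMonoid.of (DRel n) a
              from rfl,
            mul_assoc, ih, ← mul_assoc, pm_gen_mul_comm a y, mul_assoc] }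

/-! ### Stage 8: generator-level consequences and finset products -/

section Stage8

variable {n : ℕ}

attribute [local instance] Classical.propDecidable

/-- abbreviation for the generator image -/
noncomputable def egen (g : DGen n) : PresentedMonoid (DRel n) :=
  PresentedMonoid.of (DRel n) g

theorem egen_idem (g : DGen n) : egen g * egen g = egen g := pm_gen_idem g

theorem gen_eta (g : DGen n) {h : g.1.1 < g.1.2 ∧ g.1.2 ≠ PM.neg g.1.1} :
    g = ⟨(g.1.1, g.1.2), h⟩ := Subtype.ext rfl

theorem egen_dual (i j : PM n) (hij : i < j) (hji : j ≠ PM.neg i) :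
    egen ⟨(i, j), hij, hji⟩ =
      egen ⟨(PM.neg j, PM.neg i), PM.neg_lt_neg hij, PM.neg_ne_neg_neg hji⟩ :=
  pm_rel_eq (DRel.PD4 i j hij hji)

theorem egen_PD3a (i j k : PM n) (hij : i < j) (hjk : j < k)
    (hji : j ≠ PM.neg i) (hkj : k ≠ PM.neg j) (hki : k ≠ PM.neg i) :
    egen ⟨(i, j), hij, hji⟩ * egen ⟨(j, k), hjk, hkj⟩ =
      egen ⟨(i, j), hij, hji⟩ * egen ⟨(i, k), hij.trans hjk, hki⟩ :=
  pm_rel_eq (DRel.PD3a i j k hij hjk hji hkj hki)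

theorem egen_PD3b (i j k : PM n) (hij : i < j) (hjk : j < k)
    (hji : j ≠ PM.neg i) (hkj : k ≠ PM.neg j) (hki : k ≠ PM.neg i) :
    egen ⟨(i, j), hij, hji⟩ * egen ⟨(j, k), hjk, hkj⟩ =
      egen ⟨(i, k), hij.trans hjk, hki⟩ * egen ⟨(j, k), hjk, hkj⟩ :=
  pm_rel_eq (DRel.PD3b i j k hij hjk hji hkj hki)

theorem egen_PD5 (i j r s a b c d : PM n)
    (hi : 0 < i.1) (hj : 0 < j.1) (hr : 0 < r.1) (hs : 0 < s.1)
    (ha : 0 < a.1) (hb : 0 < b.1) (hc : 0 < c.1) (hd : 0 < d.1)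
    (hij : i < j) (hrs : r < s) (hab : a < b) (hbc : b < c) (hcd : c < d)
    (hset : ({i, j, r, s} : Set (PM n)) = {a, b, c, d}) :
    egen ⟨(PM.neg i, j), PM.neg_lt_pos hi hj, by rw [PM.neg_neg]; exact hij.ne'⟩ *
      egen ⟨(i, j), hij, PM.pos_ne_neg hi hj⟩ *
      egen ⟨(PM.neg r, s), PM.neg_lt_pos hr hs, by rw [PM.neg_neg]; exact hrs.ne'⟩ *
      egen ⟨(r, s), hrs, PM.pos_ne_neg hr hs⟩ =
    egen ⟨(PM.neg a, b), PM.neg_lt_pos ha hb, by rw [PM.neg_neg]; exact hab.ne'⟩ *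
      egen ⟨(a, b), hab, PM.pos_ne_neg ha hb⟩ *
      egen ⟨(b, c), hbc, PM.pos_ne_neg hb hc⟩ *
      egen ⟨(c, d), hcd, PM.pos_ne_neg hc hd⟩ :=
  pm_rel_eq (DRel.PD5 i j r s a b c d hi hj hr hs ha hb hc hd hij hrs hab hbc hcd hset)

/-- triangle absorption: from two sides of a triangle, the third can be absorbed -/
theorem egen_tri_ABC (i j k : PM n) (hij : i < j) (hjk : j < k)
    (hji : j ≠ PM.neg i) (hkj : k ≠ PM.neg j) (hki : k ≠ PM.neg i) :
    egen ⟨(i, j), hij, hji⟩ * egen ⟨(j, k), hjk, hkj⟩ *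
        egen ⟨(i, k), hij.trans hjk, hki⟩ =
      egen ⟨(i, j), hij, hji⟩ * egen ⟨(j, k), hjk, hkj⟩ := by
  rw [egen_PD3a i j k hij hjk hji hkj hki, mul_assoc, egen_idem]

theorem egen_tri_ACB (i j k : PM n) (hij : i < j) (hjk : j < k)
    (hji : j ≠ PM.neg i) (hkj : k ≠ PM.neg j) (hki : k ≠ PM.neg i) :
    egen ⟨(i, j), hij, hji⟩ * egen ⟨(i, k), hij.trans hjk, hki⟩ *
        egen ⟨(j, k), hjk, hkj⟩ =
      egen ⟨(i, j), hij, hji⟩ * egen ⟨(i, k), hij.trans hjk, hki⟩ := by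
  rw [← egen_PD3a i j k hij hjk hji hkj hki, mul_assoc, egen_idem,
    egen_PD3a i j k hij hjk hji hkj hki]

theorem egen_tri_BCA (i j k : PM n) (hij : i < j) (hjk : j < k)
    (hji : j ≠ PM.neg i) (hkj : k ≠ PM.neg j) (hki : k ≠ PM.neg i) :
    egen ⟨(j, k), hjk, hkj⟩ * egen ⟨(i, k), hij.trans hjk, hki⟩ *
        egen ⟨(i, j), hij, hji⟩ =
      egen ⟨(j, k), hjk, hkj⟩ * egen ⟨(i, k), hij.trans hjk, hki⟩ := by
  have h1 : egen ⟨(j, k), hjk, hkj⟩ * egen ⟨(i, k), hij.trans hjk, hki⟩ =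
      egen ⟨(i, j), hij, hji⟩ * egen ⟨(j, k), hjk, hkj⟩ := by
    rw [mul_comm, ← egen_PD3b i j k hij hjk hji hkj hki]
  rw [h1, mul_comm _ (egen ⟨(i, j), hij, hji⟩), ← mul_assoc, egen_idem]

/-- the set of generator pairs related by a partition -/
noncomputable def pairsF (I : Setoid (PM n)) : Finset (DGen n) :=
  Set.Finite.toFinset (Set.toFinite {g : DGen n | I g.1.1 g.1.2})

theorem mem_pairsF {I : Setoid (PM n)} {g : DGen n} :
    g ∈ pairsF I ↔ I g.1.1 g.1.2 := Set.Finite.mem_toFinset _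

/-- product of generators over a finset -/
noncomputable def PS (S : Finset (DGen n)) : PresentedMonoid (DRel n) :=
  S.prod (fun g => egen g)

theorem PS_absorb {S : Finset (DGen n)} {g : DGen n} (hg : g ∈ S) :
    PS S * egen g = PS S := by
  unfold PS
  rw [← Finset.mul_prod_erase S _ hg, mul_right_comm, egen_idem]

theorem PS_insert (S : Finset (DGen n)) (g : DGen n) :
    PS (insert g S) = egen g * PS S := by
  by_cases hg : g ∈ S
  · rw [Finset.insert_eq_self.mpr hg, mul_comm, PS_absorb hg]
  · exact Finset.prod_insert hg

theorem PS_absorb' {S : Finset (DGen n)} {g : DGen n} (hg : g ∈ S)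
    (x : PresentedMonoid (DRel n)) : PS S * (egen g * x) = PS S * x := by
  rw [← mul_assoc, PS_absorb hg]

/-- the join of the generators -/
noncomputable def WS (S : Finset (DGen n)) : Setoid (PM n) :=
  S.sup (fun g => eps g.1.1 g.1.2)

theorem WS_signed (S : Finset (DGen n)) : IsSigned (WS S) := by
  induction S using Finset.induction_on with
  | empty => exact isSigned_bot
  | insert _ _ h ih =>
    rw [WS, Finset.sup_insert]
    exact isSigned_sup (isSigned_eps _ _) ih

theorem dClose_bot : dClose (⊥ : Setoid (PM n)) = ⊥ := by
  apply dClose_eq_self isSigned_bot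
  intro x y hx _
  exact absurd hx (fun h => pm_neg_ne x h.symm)

theorem prodD_val (S : Finset (DGen n)) : (S.prod toD).1 = dClose (WS S) := by
  induction S using Finset.induction_on with
  | empty => rw [Finset.prod_empty, WS, Finset.sup_empty, dClose_bot]; rfl
  | insert _ _ ha ih =>
    rename_i a S
    rw [Finset.prod_insert ha, dpart_mul_val, ih,
      show ((toD a).1 : Setoid (PM n)) = eps a.1.1 a.1.2 from rfl,
      dClose_sup_right (isSigned_eps _ _) (WS_signed S),
      show WS (insert a S) = eps a.1.1 a.1.2 ⊔ WS S from Finset.sup_insert]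

theorem liftD_PS (S : Finset (DGen n)) : liftD (PS S) = S.prod toD := by
  unfold PS
  rw [map_prod]
  rfl

end Stage8

/-! ### Stage 9: the normal form recovers the partition -/

section Stage9

variable {n : ℕ}

attribute [local instance] Classical.propDecidable

theorem pm_pair_cases {a b c d : PM n} (h : ({a, b} : Set (PM n)) = {c, d}) :
    (a = c ∧ b = d) ∨ (a = d ∧ b = c) := by
  have h1 := Set.ext_iff.mp h a
  have h2 := Set.ext_iff.mp h b
  have h3 := Set.ext_iff.mp h c
  have h4 := Set.ext_iff.mp h d
  simp only [Set.mem_insert_iff, Set.mem_singleton_iff, pm_eq_iff, true_or, or_true,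
    true_iff, iff_true] at h1 h2 h3 h4
  simp only [pm_eq_iff]
  omega

theorem eps_rel_mem {i j x y : PM n} (hx : x ∈ ({i, j} : Set (PM n)))
    (hy : y ∈ ({i, j} : Set (PM n))) : eps i j x y :=
  (le_sup_right : muSet ({i, j} : Set (PM n)) ≤ eps i j) (muSet_rel_of_mem hx hy)

theorem eps_rel_mem' {i j x y : PM n}
    (hx : x ∈ ({PM.neg j, PM.neg i} : Set (PM n)))
    (hy : y ∈ ({PM.neg j, PM.neg i} : Set (PM n))) : eps i j x y :=
  (le_sup_left : muSet ({PM.neg j, PM.neg i} : Set (PM n)) ≤ eps i j)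
    (muSet_rel_of_mem hx hy)

theorem eps_le_of_rel {I : Setoid (PM n)} (hI : IsSigned I) {i j : PM n} (h : I i j) :
    eps i j ≤ I := by
  rw [eps_def']
  apply sup_le
  · apply muSet_le
    have h' : I (PM.neg j) (PM.neg i) := signed_rel hI (I.symm' h)
    rintro a (rfl | rfl) b (rfl | rfl)
    · exact I.refl' _
    · exact h'
    · exact I.symm' h'
    · exact I.refl' _
  · apply muSet_le
    rintro a (rfl | rfl) b (rfl | rfl)
    · exact I.refl' _
    · exact h
    · exact I.symm' h
    · exact I.refl' _

/-- the sorted generator attached to an unordered valid pair -/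
noncomputable def sortGen (x y : PM n) (hne : y ≠ x) (hneg : y ≠ PM.neg x) : DGen n :=
  if h : x < y then ⟨(x, y), h, hneg⟩
  else ⟨(y, x), lt_of_le_of_ne (not_lt.mp h) hne,
    fun hc => hneg (pm_eq_neg_iff.mp hc).symm⟩

theorem sortGen_pairSet (x y : PM n) (hne : y ≠ x) (hneg : y ≠ PM.neg x) :
    ({(sortGen x y hne hneg).1.1, (sortGen x y hne hneg).1.2} : Set (PM n)) = {x, y} := by
  unfold sortGen
  split
  · rfl
  · exact Set.pair_comm _ _

theorem rel_of_pairSet {I : Setoid (PM n)} {a b c d : PM n}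
    (h : ({a, b} : Set (PM n)) = {c, d}) (hcd : I c d) : I a b := by
  rcases pm_pair_cases h with ⟨rfl, rfl⟩ | ⟨rfl, rfl⟩
  · exact hcd
  · exact I.symm' hcd

theorem WS_rel_of_sortGen {S : Finset (DGen n)} {x y : PM n} {hne : y ≠ x}
    {hneg : y ≠ PM.neg x} (hg : sortGen x y hne hneg ∈ S) : WS S x y := by
  set g := sortGen x y hne hneg
  have h1 : eps g.1.1 g.1.2 ≤ WS S :=
    Finset.le_sup (f := fun g : DGen n => eps g.1.1 g.1.2) hg
  have h2 : eps g.1.1 g.1.2 x y := by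
    have hp := sortGen_pairSet x y hne hneg
    apply eps_rel_mem <;> rw [hp] <;> simp
  exact h1 h2

theorem key_recover {I : Setoid (PM n)} (hI : IsDPart I) :
    dClose (WS (pairsF I)) = I := by
  apply le_antisymm
  · apply dClose_le (dpart_isZC hI)
    apply Finset.sup_le
    intro g hg
    exact eps_le_of_rel hI.1.1 (mem_pairsF.mp hg)
  · intro x y hxy
    rcases eq_or_ne y x with rfl | hne
    · exact (dClose _).refl' _
    rcases eq_or_ne y (PM.neg x) with rfl | hneg
    · -- x is a zero element of I
      obtain ⟨z, hz, hz1, hz2⟩ := zero_three hI hxy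
      have hg1 : sortGen x z hz1 hz2 ∈ pairsF I := by
        rw [mem_pairsF]
        exact rel_of_pairSet (sortGen_pairSet x z hz1 hz2) (I.symm' hz)
      have hneg2 : PM.neg x ≠ PM.neg z := fun hc => hz1 (PM.neg_injective hc).symm
      have hg2 : sortGen z (PM.neg x) hz2.symm hneg2 ∈ pairsF I := by
        rw [mem_pairsF]
        apply rel_of_pairSet (sortGen_pairSet _ _ _ _)
        exact I.trans' hz hxy
      have hWx : ZeroEl (WS (pairsF I)) x := by
        have h1 := WS_rel_of_sortGen hg1
        have h2 := WS_rel_of_sortGen hg2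
        exact (WS (pairsF I)).trans' h1 h2
      exact dClose_rel_of_zero hWx (signed_zero_neg (WS_signed _) hWx)
    · have hg : sortGen x y hne hneg ∈ pairsF I := by
        rw [mem_pairsF]
        exact rel_of_pairSet (sortGen_pairSet x y hne hneg) hxy
      exact le_dClose _ (WS_rel_of_sortGen hg)

theorem liftD_PS_pairsF {I : Setoid (PM n)} (hI : IsDPart I) :
    liftD (PS (pairsF I)) = ⟨I, hI⟩ := by
  apply Subtype.ext
  rw [liftD_PS]
  show (Finset.prod _ toD).1 = I
  rw [prodD_val, key_recover hI]

end Stage9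

/-! ### Stage 10: the edge graph of a generating set -/

section Stage10

variable {n : ℕ}

attribute [local instance] Classical.propDecidable

/-- edge relation of a generating set -/
def edge (S : Finset (DGen n)) (x y : PM n) : Prop :=
  ∃ g ∈ S, ({x, y} : Set (PM n)) = {g.1.1, g.1.2} ∨
    ({x, y} : Set (PM n)) = {PM.neg g.1.2, PM.neg g.1.1}

theorem edge_mem {S : Finset (DGen n)} {g : DGen n} (hg : g ∈ S) :
    edge S g.1.1 g.1.2 := ⟨g, hg, Or.inl rfl⟩

theorem edge_symm {S : Finset (DGen n)} {x y : PM n} (h : edge S x y) : edge S y x := by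
  obtain ⟨g, hg, h | h⟩ := h
  · exact ⟨g, hg, Or.inl (by rw [Set.pair_comm y x, h])⟩
  · exact ⟨g, hg, Or.inr (by rw [Set.pair_comm y x, h])⟩

theorem edge_congr {S : Finset (DGen n)} {x y u v : PM n}
    (hp : ({x, y} : Set (PM n)) = {u, v}) (h : edge S u v) : edge S x y := by
  obtain ⟨g, hg, h | h⟩ := h
  · exact ⟨g, hg, Or.inl (hp.trans h)⟩
  · exact ⟨g, hg, Or.inr (hp.trans h)⟩

theorem edge_neg {S : Finset (DGen n)} {x y : PM n} (h : edge S x y) :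
    edge S (PM.neg x) (PM.neg y) := by
  obtain ⟨g, hg, h | h⟩ := h
  · refine ⟨g, hg, Or.inr ?_⟩
    have := congrArg negSet h
    rw [negSet_pair, negSet_pair] at this
    rw [this, Set.pair_comm]
  · refine ⟨g, hg, Or.inl ?_⟩
    have := congrArg negSet h
    rw [negSet_pair, negSet_pair] at this
    rw [this]
    simp only [PM.neg_neg]
    rw [Set.pair_comm]

theorem edge_ne_and {S : Finset (DGen n)} {x y : PM n} (h : edge S x y) :
    y ≠ x ∧ y ≠ PM.neg x := by
  obtain ⟨g, hg, h | h⟩ := h <;>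
  · have hlt : g.1.1.1 < g.1.2.1 := g.2.1
    have hne : g.1.2.1 ≠ -g.1.1.1 := fun hc => g.2.2 (pm_eq_iff.mpr (by simpa using hc))
    rcases pm_pair_cases h with ⟨h1, h2⟩ | ⟨h1, h2⟩ <;>
      rw [pm_eq_iff] at h1 h2 <;>
      constructor <;> intro hc <;> rw [pm_eq_iff] at hc <;>
      simp -failIfUnchanged only [pm_neg_val] at * <;> omega

theorem edge_le_WS {S : Finset (DGen n)} {x y : PM n} (h : edge S x y) : WS S x y := by
  obtain ⟨g, hg, h | h⟩ := h
  · refine (Finset.le_sup (f := fun g : DGen n => eps g.1.1 g.1.2) hg :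
      eps g.1.1 g.1.2 ≤ WS S) ?_
    exact eps_rel_mem (by rw [← h]; simp) (by rw [← h]; simp)
  · refine (Finset.le_sup (f := fun g : DGen n => eps g.1.1 g.1.2) hg :
      eps g.1.1 g.1.2 ≤ WS S) ?_
    exact eps_rel_mem' (by rw [← h]; simp) (by rw [← h]; simp)

theorem pair_eq_of_mem {α : Type*} {x y i j : α} (hx : x ∈ ({i, j} : Set α))
    (hy : y ∈ ({i, j} : Set α)) (hne : x ≠ y) : ({x, y} : Set α) = {i, j} := by
  rcases hx with rfl | hx
  · rcases hy with rfl | hy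
    · exact absurd rfl hne
    · rw [Set.mem_singleton_iff] at hy
      rw [hy]
  · rw [Set.mem_singleton_iff] at hx
    subst hx
    rcases hy with rfl | hy
    · exact Set.pair_comm _ _
    · rw [Set.mem_singleton_iff] at hy
      subst hy
      exact absurd rfl hne

theorem eqvGen_edge_of_WS {S : Finset (DGen n)} {x y : PM n} (h : WS S x y) :
    Relation.EqvGen (edge S) x y := by
  have hle : WS S ≤ Relation.EqvGen.setoid (edge S) := by
    apply Finset.sup_le
    intro g hg
    rw [eps_def']
    apply sup_le
    · apply muSet_le
      intro a ha b hb
      rcases eq_or_ne a b with rfl | hne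
      · exact (Relation.EqvGen.setoid (edge S)).refl' a
      · exact Relation.EqvGen.rel _ _ ⟨g, hg, Or.inr (pair_eq_of_mem ha hb hne)⟩
    · apply muSet_le
      intro a ha b hb
      rcases eq_or_ne a b with rfl | hne
      · exact (Relation.EqvGen.setoid (edge S)).refl' a
      · exact Relation.EqvGen.rel _ _ ⟨g, hg, Or.inl (pair_eq_of_mem ha hb hne)⟩
  exact hle h

/-- paths with explicit length -/
inductive EPath (r : PM n → PM n → Prop) : PM n → PM n → ℕ → Prop
  | single {x y : PM n} : r x y → EPath r x y 1
  | cons {x y z : PM n} {k : ℕ} : r x y → EPath r y z k → EPath r x z (k + 1)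

theorem EPath.snoc {r : PM n → PM n → Prop} {x y z : PM n} {k : ℕ}
    (h : EPath r x y k) (hyz : r y z) : EPath r x z (k + 1) := by
  induction h with
  | single h => exact EPath.cons h (EPath.single hyz)
  | cons h _ ih => exact EPath.cons h (ih hyz)

theorem path_of_eqvGen {S : Finset (DGen n)} {x y : PM n}
    (h : Relation.EqvGen (edge S) x y) : x = y ∨ ∃ k, EPath (edge S) x y k := by
  induction h with
  | rel a b hab => exact Or.inr ⟨1, EPath.single hab⟩
  | refl a => exact Or.inl rfl
  | symm a b _ ih =>
    rcases ih with rfl | ⟨k, hp⟩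
    · exact Or.inl rfl
    · refine Or.inr ⟨k, ?_⟩
      clear * - hp
      induction hp with
      | single h => exact EPath.single (edge_symm h)
      | cons h _ ih => exact ih.snoc (edge_symm h)
  | trans a b c _ _ ih1 ih2 =>
    rcases ih1 with rfl | ⟨k1, hp1⟩
    · exact ih2
    · rcases ih2 with rfl | ⟨k2, hp2⟩
      · exact Or.inr ⟨k1, hp1⟩
      · refine Or.inr ⟨k1 + k2, ?_⟩
        clear * - hp1 hp2
        induction hp1 with
        | single h => rw [Nat.add_comm]; exact EPath.cons h hp2
        | cons h _ ih =>
          have := EPath.cons h (ih hp2)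
          convert this using 1
          omega

/-- the closure lemma: if the edge set is closed under admissible triangle
completion, then any two connected vertices forming a valid pair are adjacent. -/
theorem edge_closure {S : Finset (DGen n)}
    (Htri : ∀ x y z, edge S x y → edge S y z → z ≠ x → z ≠ PM.neg x → edge S x z) :
    ∀ k x y, EPath (edge S) x y k → y ≠ x → y ≠ PM.neg x → edge S x y := by
  intro k
  induction k using Nat.strong_induction_on with
  | _ k ih =>
    intro x y hp hne hneg
    cases hp with
    | single h => exact h
    | cons hxz1 hp' =>
      rename_i z1 k'
      cases hp' with
      | single hz1y => exact Htri x z1 y hxz1 hz1y hne hneg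
      | cons hz1z2 hp'' =>
        rename_i z2 k''
        rcases eq_or_ne z2 x with rfl | hz2x
        · exact ih k'' (by omega) _ y hp'' hne hneg
        rcases eq_or_ne z2 (PM.neg x) with rfl | hz2nx
        · have hnxy : edge S (PM.neg x) y := by
            apply ih k'' (by omega) (PM.neg x) y hp''
            · exact hneg
            · rw [PM.neg_neg]; exact hne
          rcases eq_or_ne z1 y with rfl | hz1y
          · exact hxz1
          rcases eq_or_ne z1 (PM.neg y) with rfl | hz1ny
          · have := edge_neg hz1z2
            rw [PM.neg_neg, PM.neg_neg] at this
            exact edge_symm this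
          · have h3 : edge S z1 y := by
              apply Htri z1 (PM.neg x) y hz1z2 hnxy hz1y.symm
              exact fun hc => hz1ny (pm_eq_neg_iff.mp hc).symm
            exact Htri x z1 y hxz1 h3 hne hneg
        · have hxz2 : edge S x z2 := Htri x z1 z2 hxz1 hz1z2 hz2x hz2nx
          exact ih (k'' + 1) (by omega) x y (EPath.cons hxz2 hp'') hne hneg

theorem edge_of_WS {S : Finset (DGen n)}
    (Htri : ∀ x y z, edge S x y → edge S y z → z ≠ x → z ≠ PM.neg x → edge S x z)
    {x y : PM n} (h : WS S x y) (hne : y ≠ x) (hneg : y ≠ PM.neg x) : edge S x y := by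
  rcases path_of_eqvGen (eqvGen_edge_of_WS h) with rfl | ⟨k, hp⟩
  · exact absurd rfl hne
  · exact edge_closure Htri k x y hp hne hneg

end Stage10

/-! ### Stage 11: sorted generators, triangles, sorting helpers -/

section Stage11

variable {n : ℕ}

attribute [local instance] Classical.propDecidable

theorem ne_neg_symm {x y : PM n} (h : y ≠ PM.neg x) : x ≠ PM.neg y :=
  fun hc => h (pm_eq_neg_iff.mp hc).symm

theorem sortGen_lt {x y : PM n} (h : x < y) (hne : y ≠ x) (hneg : y ≠ PM.neg x) :
    sortGen x y hne hneg = ⟨(x, y), h, hneg⟩ := dif_pos h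

theorem sortGen_gt {x y : PM n} (h : y < x) (hne : y ≠ x) (hneg : y ≠ PM.neg x) :
    sortGen x y hne hneg = ⟨(y, x), h, ne_neg_symm hneg⟩ := by
  unfold sortGen
  rw [dif_neg (not_lt.mpr h.le)]

theorem sortGen_eq_of_pairSet {g : DGen n} {x y : PM n} {hne : y ≠ x}
    {hneg : y ≠ PM.neg x} (h : ({x, y} : Set (PM n)) = {g.1.1, g.1.2}) :
    sortGen x y hne hneg = g := by
  have hp := (sortGen_pairSet x y hne hneg).trans h
  rcases pm_pair_cases hp with ⟨h1, h2⟩ | ⟨h1, h2⟩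
  · exact Subtype.ext (Prod.ext_iff.mpr ⟨h1, h2⟩)
  · exfalso
    have l1 : (sortGen x y hne hneg).1.1.1 < (sortGen x y hne hneg).1.2.1 :=
      (sortGen x y hne hneg).2.1
    have l2 : g.1.1.1 < g.1.2.1 := g.2.1
    rw [pm_eq_iff] at h1 h2
    omega

/-- dual generator -/
def dualGen (g : DGen n) : DGen n :=
  ⟨(PM.neg g.1.2, PM.neg g.1.1), PM.neg_lt_neg g.2.1, PM.neg_ne_neg_neg g.2.2⟩

theorem egen_dualGen (g : DGen n) : egen g = egen (dualGen g) :=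
  egen_dual g.1.1 g.1.2 g.2.1 g.2.2

theorem edge_sortGen_mem {S : Finset (DGen n)} (hdual : ∀ g ∈ S, dualGen g ∈ S)
    {x y : PM n} (h : edge S x y) (hne : y ≠ x) (hneg : y ≠ PM.neg x) :
    sortGen x y hne hneg ∈ S := by
  obtain ⟨g, hg, h | h⟩ := h
  · rw [sortGen_eq_of_pairSet h]
    exact hg
  · rw [sortGen_eq_of_pairSet (g := dualGen g) h]
    exact hdual g hg

/-- unordered triangle absorption -/
theorem egen_tri_unordered (x y z : PM n)
    (hyx : y ≠ x) (hynx : y ≠ PM.neg x)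
    (hzy : z ≠ y) (hzny : z ≠ PM.neg y)
    (hzx : z ≠ x) (hznx : z ≠ PM.neg x) :
    egen (sortGen x y hyx hynx) * egen (sortGen y z hzy hzny) *
        egen (sortGen x z hzx hznx) =
      egen (sortGen x y hyx hynx) * egen (sortGen y z hzy hzny) := by
  rcases lt_trichotomy x y with hxy | rfl | hxy
  · rcases lt_trichotomy y z with hyz | rfl | hyz
    · -- x < y < z
      rw [sortGen_lt hxy, sortGen_lt hyz, sortGen_lt (hxy.trans hyz)]
      exact egen_tri_ABC x y z hxy hyz hynx hzny hznx
    · exact absurd rfl hzy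
    · rcases lt_trichotomy x z with hxz | rfl | hxz
      · -- x < z < y
        rw [sortGen_lt hxy, sortGen_gt hyz, sortGen_lt hxz]
        rw [mul_comm (egen ⟨(x, y), hxy, hynx⟩) (egen ⟨(z, y), hyz, ne_neg_symm hzny⟩)]
        exact egen_tri_BCA x z y hxz hyz hznx (ne_neg_symm hzny) hynx
      · exact absurd rfl hzx
      · -- z < x < y
        rw [sortGen_lt hxy, sortGen_gt hyz, sortGen_gt hxz]
        exact egen_tri_BCA z x y hxz hxy (ne_neg_symm hznx) hynx (ne_neg_symm hzny)
  · exact absurd rfl hyx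
  · rcases lt_trichotomy y z with hyz | rfl | hyz
    · rcases lt_trichotomy x z with hxz | rfl | hxz
      · -- y < x < z
        rw [sortGen_gt hxy, sortGen_lt hyz, sortGen_lt hxz]
        exact egen_tri_ACB y x z hxy hxz (ne_neg_symm hynx) hznx hzny
      · exact absurd rfl hzx
      · -- y < z < x
        rw [sortGen_gt hxy, sortGen_lt hyz, sortGen_gt hxz]
        rw [mul_comm (egen ⟨(y, x), hxy, ne_neg_symm hynx⟩) (egen ⟨(y, z), hyz, hzny⟩)]
        exact egen_tri_ACB y z x hyz hxz hzny (ne_neg_symm hznx) (ne_neg_symm hynx)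
    · exact absurd rfl hzy
    · -- z < y < x
      rw [sortGen_gt hxy, sortGen_gt hyz, sortGen_gt (hyz.trans hxy)]
      rw [mul_comm (egen ⟨(y, x), hxy, ne_neg_symm hynx⟩) (egen ⟨(z, y), hyz, ne_neg_symm hzny⟩)]
      exact egen_tri_ABC z y x hyz hxy (ne_neg_symm hzny) (ne_neg_symm hynx)
        (ne_neg_symm hznx)

/-- sorting four distinct elements -/
theorem pm_sort4 {p q r s : PM n} (hpq : p < q) (hrs : r < s)
    (h1 : p ≠ r) (h2 : p ≠ s) (h3 : q ≠ r) (h4 : q ≠ s) :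
    ∃ a b c d : PM n, a < b ∧ b < c ∧ c < d ∧
      ({p, q, r, s} : Set (PM n)) = {a, b, c, d} := by
  rcases lt_or_gt_of_ne h1 with hpr | hrp
  · rcases lt_or_gt_of_ne h3 with hqr | hrq
    · exact ⟨p, q, r, s, hpq, hqr, hrs, rfl⟩
    · rcases lt_or_gt_of_ne h4 with hqs | hsq
      · refine ⟨p, r, q, s, hpr, hrq, hqs, ?_⟩
        ext w; simp only [Set.mem_insert_iff, Set.mem_singleton_iff]; tauto
      · refine ⟨p, r, s, q, hpr, hrs, hsq, ?_⟩
        ext w; simp only [Set.mem_insert_iff, Set.mem_singleton_iff]; tauto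
  · rcases lt_or_gt_of_ne h2 with hps | hsp
    · rcases lt_or_gt_of_ne h4 with hqs | hsq
      · refine ⟨r, p, q, s, hrp, hpq, hqs, ?_⟩
        ext w; simp only [Set.mem_insert_iff, Set.mem_singleton_iff]; tauto
      · refine ⟨r, p, s, q, hrp, hps, hsq, ?_⟩
        ext w; simp only [Set.mem_insert_iff, Set.mem_singleton_iff]; tauto
    · refine ⟨r, s, p, q, hrs, hsp, hpq, ?_⟩
      ext w; simp only [Set.mem_insert_iff, Set.mem_singleton_iff]; tauto

theorem listprod_absorb (l : List (DGen n)) (g : DGen n) (hg : g ∈ l) :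
    (l.map egen).prod * egen g = (l.map egen).prod := by
  induction l with
  | nil => cases hg
  | cons a t ih =>
    simp only [List.map_cons, List.prod_cons]
    rcases List.mem_cons.mp hg with rfl | hg'
    · rw [mul_right_comm, egen_idem]
    · rw [mul_assoc, ih hg']

theorem PS_absorb_listprod {S : Finset (DGen n)} (l : List (DGen n))
    (h : ∀ g ∈ l, g ∈ S) : PS S * (l.map egen).prod = PS S := by
  induction l with
  | nil => simp
  | cons a t ih =>
    simp only [List.map_cons, List.prod_cons]
    rw [PS_absorb' (h a List.mem_cons_self)]
    exact ih (fun g hg => h g (List.mem_cons_of_mem a hg))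

@[simp] theorem pm_abs_val (x : PM n) : (PM.abs x).1 = |x.1| := rfl

theorem pm_abs_pos (x : PM n) : 0 < (PM.abs x).1 := abs_pos.mpr x.2.1

theorem pm_abs_cases (x : PM n) : PM.abs x = x ∨ PM.abs x = PM.neg x := by
  rcases le_or_gt 0 x.1 with h | h
  · exact Or.inl (Subtype.ext (abs_of_nonneg h))
  · exact Or.inr (Subtype.ext (abs_of_neg h))

theorem pm_abs_eq_abs {x z : PM n} (h : PM.abs x = PM.abs z) :
    z = x ∨ z = PM.neg x := by
  have := congrArg Subtype.val h
  simp only [pm_abs_val] at this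
  rcases abs_eq_abs.mp this with h' | h'
  · exact Or.inl (pm_eq_iff.mpr h'.symm)
  · exact Or.inr (pm_eq_iff.mpr (by simp only [pm_neg_val]; omega))

end Stage11

/-! ### Stage 12: the core saturation step -/

section Stage12

variable {n : ℕ}

attribute [local instance] Classical.propDecidable

theorem S_subset_TS (S : Finset (DGen n)) : S ⊆ pairsF (dClose (WS S)) := by
  intro g hg
  rw [mem_pairsF]
  exact le_dClose _ (edge_le_WS (edge_mem hg))

/-- the data produced on one side of the PD5 construction -/
theorem side_data {S : Finset (DGen n)} (hdual : ∀ g ∈ S, dualGen g ∈ S)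
    (Htri : ∀ x y z, edge S x y → edge S y z → z ≠ x → z ≠ PM.neg x → edge S x z)
    (u : PM n) (hu : ZeroEl (WS S) u) :
    ∃ i j : PM n, ∃ (hij : i < j) (hi : 0 < i.1) (hj : 0 < j.1),
      (⟨(i, j), hij, PM.pos_ne_neg hi hj⟩ : DGen n) ∈ S ∧
      (⟨(PM.neg i, j), PM.neg_lt_pos hi hj,
        by rw [PM.neg_neg]; exact hij.ne'⟩ : DGen n) ∈ S ∧
      (∀ w, w = i ∨ w = j → WS S u w ∧ ZeroEl (WS S) w) := by
  obtain ⟨z, e1⟩ : ∃ z, edge S u z := by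
    rcases path_of_eqvGen (eqvGen_edge_of_WS hu) with heq | ⟨k, hp⟩
    · exact absurd heq.symm (pm_neg_ne u)
    · cases hp with
      | single h => exact ⟨_, h⟩
      | cons h _ => exact ⟨_, h⟩
  obtain ⟨hzu, hznu⟩ := edge_ne_and e1
  have hWuz : WS S u z := edge_le_WS e1
  have huz : ZeroEl (WS S) z := by
    have h1 : WS S (PM.neg u) (PM.neg z) := signed_rel (WS_signed S) hWuz
    exact (WS S).trans' ((WS S).symm' hWuz) ((WS S).trans' hu h1)
  have e2 : edge S u (PM.neg z) := by
    apply edge_of_WS Htri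
    · exact (WS S).trans' hu (signed_rel (WS_signed S) hWuz)
    · intro hc
      exact hznu (by rw [← hc, PM.neg_neg])
    · intro hc
      exact hzu (PM.neg_injective hc)
  have e3 : edge S (PM.neg u) (PM.neg z) := edge_neg e1
  have e4 : edge S (PM.neg u) z := by
    have := edge_neg e2
    rwa [PM.neg_neg] at this
  have hcross : ∀ v w : PM n, (v = u ∨ v = PM.neg u) → (w = z ∨ w = PM.neg z) →
      edge S v w := by
    rintro v w (rfl | rfl) (rfl | rfl)
    exacts [e1, e2, e4, e3]
  set pu := PM.abs u with hpu_def
  set pz := PM.abs z with hpz_def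
  have hpu : pu = u ∨ pu = PM.neg u := pm_abs_cases u
  have hpz : pz = z ∨ pz = PM.neg z := pm_abs_cases z
  have hedge_ab : ∀ v w : PM n, (v = pu ∨ v = PM.neg pu) → (w = pz ∨ w = PM.neg pz) →
      edge S v w := by
    rintro v w (rfl | rfl) (rfl | rfl) <;>
      [skip; skip; skip; skip] <;>
      apply hcross <;>
      first
        | (rcases hpu with h' | h' <;> rw [h'] <;> simp)
        | (rcases hpz with h' | h' <;> rw [h'] <;> simp)
  have hne_ab : pu ≠ pz := by
    intro hc
    rcases pm_abs_eq_abs hc with h | h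
    · exact hzu h
    · exact hznu h
  have hWu : ∀ w : PM n, (w = pu ∨ w = PM.neg pu) ∨ (w = pz ∨ w = PM.neg pz) →
      WS S u w ∧ ZeroEl (WS S) w := by
    have hWu_pu : WS S u pu := by
      rcases hpu with h' | h'
      · rw [h']
      · rw [h']; exact hu
    have hWu_pz : WS S u pz := by
      rcases hpz with h' | h'
      · rw [h']; exact hWuz
      · rw [h']; exact (WS S).trans' hWuz huz
    have hz_pu : ZeroEl (WS S) pu := by
      rcases hpu with h' | h' <;> rw [h']
      · exact hu
      · exact signed_zero_neg (WS_signed S) hu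
    have hz_pz : ZeroEl (WS S) pz := by
      rcases hpz with h' | h' <;> rw [h']
      · exact huz
      · exact signed_zero_neg (WS_signed S) huz
    rintro w ((rfl | rfl) | (rfl | rfl))
    · exact ⟨hWu_pu, hz_pu⟩
    · exact ⟨(WS S).trans' hWu_pu hz_pu, signed_zero_neg (WS_signed S) hz_pu⟩
    · exact ⟨hWu_pz, hz_pz⟩
    · exact ⟨(WS S).trans' hWu_pz hz_pz, signed_zero_neg (WS_signed S) hz_pz⟩
  have hmemS : ∀ (i j : PM n) (hij : i < j) (hi : 0 < i.1) (hj : 0 < j.1),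
      edge S i j → edge S (PM.neg i) j →
      ((⟨(i, j), hij, PM.pos_ne_neg hi hj⟩ : DGen n) ∈ S ∧
        (⟨(PM.neg i, j), PM.neg_lt_pos hi hj,
          by rw [PM.neg_neg]; exact hij.ne'⟩ : DGen n) ∈ S) := by
    intro i j hij hi hj heij henij
    constructor
    · have := edge_sortGen_mem hdual heij hij.ne' (PM.pos_ne_neg hi hj)
      rwa [sortGen_lt hij] at this
    · have hne' : j ≠ PM.neg i := PM.pos_ne_neg hi hj
      have := edge_sortGen_mem hdual henij (PM.neg_lt_pos hi hj).ne'
        (by rw [PM.neg_neg]; exact hij.ne')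
      rwa [sortGen_lt (PM.neg_lt_pos hi hj)] at this
  rcases lt_or_gt_of_ne hne_ab with hlt | hlt
  · -- pu < pz
    have hpos_u : 0 < pu.1 := pm_abs_pos u
    have hpos_z : 0 < pz.1 := pm_abs_pos z
    obtain ⟨m1, m2⟩ := hmemS pu pz hlt hpos_u hpos_z
      (hedge_ab pu pz (Or.inl rfl) (Or.inl rfl))
      (hedge_ab (PM.neg pu) pz (Or.inr rfl) (Or.inl rfl))
    exact ⟨pu, pz, hlt, hpos_u, hpos_z, m1, m2, fun w hw => hWu w (by tauto)⟩
  · -- pz < pu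
    have hpos_u : 0 < pu.1 := pm_abs_pos u
    have hpos_z : 0 < pz.1 := pm_abs_pos z
    obtain ⟨m1, m2⟩ := hmemS pz pu hlt hpos_z hpos_u
      (edge_symm (hedge_ab pu pz (Or.inl rfl) (Or.inl rfl)))
      (edge_symm (hedge_ab pu (PM.neg pz) (Or.inl rfl) (Or.inr rfl)))
    exact ⟨pz, pu, hlt, hpos_z, hpos_u, m1, m2, fun w hw => hWu w (by tauto)⟩

end Stage12

section CoreLemma

variable {n : ℕ}

attribute [local instance] Classical.propDecidable

theorem core_step (S : Finset (DGen n)) (hSne : S ≠ pairsF (dClose (WS S))) :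
    ∃ h : DGen n, h ∈ pairsF (dClose (WS S)) ∧ h ∉ S ∧ PS (insert h S) = PS S := by
  by_cases hdual : ∀ g ∈ S, dualGen g ∈ S
  case neg =>
    push_neg at hdual
    obtain ⟨g, hg, hgd⟩ := hdual
    refine ⟨dualGen g, ?_, hgd, ?_⟩
    · rw [mem_pairsF]
      apply le_dClose
      exact (Finset.le_sup (f := fun g : DGen n => eps g.1.1 g.1.2) hg :
        eps g.1.1 g.1.2 ≤ WS S) (eps_rel_mem' (by simp [dualGen]) (by simp [dualGen]))
    · rw [PS_insert, mul_comm, ← egen_dualGen, PS_absorb hg]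
  case pos =>
  by_cases htri : ∃ x y z, edge S x y ∧ edge S y z ∧ z ≠ x ∧ z ≠ PM.neg x ∧ ¬ edge S x z
  case pos =>
    obtain ⟨x, y, z, e1, e2, hzx, hznx, hnxz⟩ := htri
    obtain ⟨hyx, hynx⟩ := edge_ne_and e1
    obtain ⟨hzy, hzny⟩ := edge_ne_and e2
    have hgxy := edge_sortGen_mem hdual e1 hyx hynx
    have hgyz := edge_sortGen_mem hdual e2 hzy hzny
    refine ⟨sortGen x z hzx hznx, ?_, ?_, ?_⟩
    · rw [mem_pairsF]
      apply rel_of_pairSet (sortGen_pairSet x z hzx hznx)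
      exact le_dClose _ ((WS S).trans' (edge_le_WS e1) (edge_le_WS e2))
    · intro hc
      exact hnxz ⟨_, hc, Or.inl (sortGen_pairSet x z hzx hznx).symm⟩
    · have key := egen_tri_unordered x y z hyx hynx hzy hzny hzx hznx
      calc PS (insert (sortGen x z hzx hznx) S)
          = PS S * egen (sortGen x z hzx hznx) := by rw [PS_insert, mul_comm]
        _ = PS S * (egen (sortGen x y hyx hynx) * (egen (sortGen y z hzy hzny) *
              egen (sortGen x z hzx hznx))) := by
            rw [PS_absorb' hgxy, PS_absorb' hgyz]
        _ = PS S * (egen (sortGen x y hyx hynx) * egen (sortGen y z hzy hzny) *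
              egen (sortGen x z hzx hznx)) := by rw [mul_assoc]
        _ = PS S * (egen (sortGen x y hyx hynx) * egen (sortGen y z hzy hzny)) := by
            rw [key]
        _ = PS S := by rw [← mul_assoc, PS_absorb hgxy, PS_absorb hgyz]
  case neg =>
    push_neg at htri
    have Htri : ∀ x y z, edge S x y → edge S y z → z ≠ x → z ≠ PM.neg x → edge S x z :=
      htri
    obtain ⟨q, hqT, hqS⟩ : ∃ q ∈ pairsF (dClose (WS S)), q ∉ S := by
      by_contra hc
      push_neg at hc
      exact hSne (Finset.Subset.antisymm (S_subset_TS S) hc)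
    have hq : dClose (WS S) q.1.1 q.1.2 := mem_pairsF.mp hqT
    have hNW : ¬ WS S q.1.1 q.1.2 := by
      intro hw
      have he := edge_of_WS Htri hw q.2.1.ne' q.2.2
      have := edge_sortGen_mem hdual he q.2.1.ne' q.2.2
      rw [sortGen_lt q.2.1] at this
      exact hqS this
    obtain ⟨hz1, hz2⟩ : ZeroEl (WS S) q.1.1 ∧ ZeroEl (WS S) q.1.2 := by
      rcases (dClose_rel_iff (WS_signed S) _ _).mp hq with hw | hzz
      · exact absurd hw hNW
      · exact hzz
    obtain ⟨i, j, hij, hi, hj, hgij, hgnij, hconn1⟩ := side_data hdual Htri _ hz1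
    obtain ⟨r, s, hrs, hr, hs, hgrs, hgnrs, hconn2⟩ := side_data hdual Htri _ hz2
    have hdist : ∀ w w' : PM n, (w = i ∨ w = j) → (w' = r ∨ w' = s) → w ≠ w' := by
      intro w w' hw hw' hc
      subst hc
      exact hNW ((WS S).trans' (hconn1 w hw).1 ((WS S).symm' (hconn2 w hw').1))
    obtain ⟨a, b, c, d, hab, hbc, hcd, hset⟩ := pm_sort4 hij hrs
      (hdist i r (Or.inl rfl) (Or.inl rfl)) (hdist i s (Or.inl rfl) (Or.inr rfl))
      (hdist j r (Or.inr rfl) (Or.inl rfl)) (hdist j s (Or.inr rfl) (Or.inr rfl))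
    have hmem4 : ∀ w : PM n, w ∈ ({a, b, c, d} : Set (PM n)) →
        (w = i ∨ w = j) ∨ (w = r ∨ w = s) := by
      intro w hw
      rw [← hset] at hw
      simpa only [Set.mem_insert_iff, Set.mem_singleton_iff, or_assoc] using hw
    have hzero4 : ∀ w : PM n, w ∈ ({a, b, c, d} : Set (PM n)) → ZeroEl (WS S) w := by
      intro w hw
      rcases hmem4 w hw with hw' | hw'
      · exact (hconn1 w hw').2
      · exact (hconn2 w hw').2
    have hpos4 : ∀ w : PM n, w ∈ ({a, b, c, d} : Set (PM n)) → 0 < w.1 := by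
      intro w hw
      rcases hmem4 w hw with (rfl | rfl) | (rfl | rfl)
      exacts [hi, hj, hr, hs]
    have ha : 0 < a.1 := hpos4 a (by simp)
    have hb : 0 < b.1 := hpos4 b (by simp)
    have hc : 0 < c.1 := hpos4 c (by simp)
    have hd : 0 < d.1 := hpos4 d (by simp)
    have hPD5 := egen_PD5 i j r s a b c d hi hj hr hs ha hb hc hd hij hrs hab hbc hcd hset
    -- the four left-hand side generators all belong to `S`
    have habs : PS S *
        (egen ⟨(PM.neg i, j), PM.neg_lt_pos hi hj, by rw [PM.neg_neg]; exact hij.ne'⟩ *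
          egen ⟨(i, j), hij, PM.pos_ne_neg hi hj⟩ *
          egen ⟨(PM.neg r, s), PM.neg_lt_pos hr hs, by rw [PM.neg_neg]; exact hrs.ne'⟩ *
          egen ⟨(r, s), hrs, PM.pos_ne_neg hr hs⟩) = PS S := by
      rw [← mul_assoc, ← mul_assoc, ← mul_assoc, PS_absorb hgnij, PS_absorb hgij,
        PS_absorb hgnrs, PS_absorb hgrs]
    have key : PS S *
        (egen ⟨(PM.neg a, b), PM.neg_lt_pos ha hb, by rw [PM.neg_neg]; exact hab.ne'⟩ *
          egen ⟨(a, b), hab, PM.pos_ne_neg ha hb⟩ *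
          egen ⟨(b, c), hbc, PM.pos_ne_neg hb hc⟩ *
          egen ⟨(c, d), hcd, PM.pos_ne_neg hc hd⟩) = PS S := by
      rw [← hPD5]
      exact habs
    -- at least one right-hand side generator is missing from `S`
    have hmiss : ∃ h' : DGen n, h' ∉ S ∧
        (h' = ⟨(PM.neg a, b), PM.neg_lt_pos ha hb, by rw [PM.neg_neg]; exact hab.ne'⟩ ∨
         h' = ⟨(a, b), hab, PM.pos_ne_neg ha hb⟩ ∨
         h' = ⟨(b, c), hbc, PM.pos_ne_neg hb hc⟩ ∨
         h' = ⟨(c, d), hcd, PM.pos_ne_neg hc hd⟩) := by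
      by_contra hcon
      push_neg at hcon
      have m2 : (⟨(a, b), hab, PM.pos_ne_neg ha hb⟩ : DGen n) ∈ S := by
        by_contra hm
        exact (hcon _ hm).2.1 rfl
      have m3 : (⟨(b, c), hbc, PM.pos_ne_neg hb hc⟩ : DGen n) ∈ S := by
        by_contra hm
        exact (hcon _ hm).2.2.1 rfl
      have m4 : (⟨(c, d), hcd, PM.pos_ne_neg hc hd⟩ : DGen n) ∈ S := by
        by_contra hm
        exact (hcon _ hm).2.2.2 rfl
      have wab : WS S a b := edge_le_WS (edge_mem m2)
      have wbc : WS S b c := edge_le_WS (edge_mem m3)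
      have wcd : WS S c d := edge_le_WS (edge_mem m4)
      have hfroma : ∀ w : PM n, w ∈ ({a, b, c, d} : Set (PM n)) → WS S a w := by
        rintro w (rfl | rfl | rfl | rfl)
        · exact (WS S).refl' w
        · exact wab
        · exact (WS S).trans' wab wbc
        · exact (WS S).trans' ((WS S).trans' wab wbc) wcd
      have hchain : ∀ w w' : PM n, w ∈ ({a, b, c, d} : Set (PM n)) →
          w' ∈ ({a, b, c, d} : Set (PM n)) → WS S w w' := by
        intro w w' hw hw'
        exact (WS S).trans' ((WS S).symm' (hfroma w hw)) (hfroma w' hw')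
      have hiM : i ∈ ({a, b, c, d} : Set (PM n)) := by rw [← hset]; simp
      have hrM : r ∈ ({a, b, c, d} : Set (PM n)) := by rw [← hset]; simp
      exact hNW ((WS S).trans' (hconn1 i (Or.inl rfl)).1
        ((WS S).trans' (hchain i r hiM hrM) ((WS S).symm' (hconn2 r (Or.inl rfl)).1)))
    obtain ⟨h', hh'S, hcase⟩ := hmiss
    refine ⟨h', ?_, hh'S, ?_⟩
    · -- h' belongs to the target pair set: both endpoints are zero elements
      rw [mem_pairsF]
      have hz : ∀ w : PM n, w ∈ ({a, b, c, d} : Set (PM n)) → ZeroEl (WS S) w := hzero4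
      apply dClose_rel_of_zero
      · rcases hcase with rfl | rfl | rfl | rfl
        · exact signed_zero_neg (WS_signed S) (hz a (by simp))
        · exact hz a (by simp)
        · exact hz b (by simp)
        · exact hz c (by simp)
      · rcases hcase with rfl | rfl | rfl | rfl
        · exact hz b (by simp)
        · exact hz b (by simp)
        · exact hz c (by simp)
        · exact hz d (by simp)
    · -- the product is unchanged
      have hRabs : (egen ⟨(PM.neg a, b), PM.neg_lt_pos ha hb,
              by rw [PM.neg_neg]; exact hab.ne'⟩ *
            egen ⟨(a, b), hab, PM.pos_ne_neg ha hb⟩ *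
            egen ⟨(b, c), hbc, PM.pos_ne_neg hb hc⟩ *
            egen ⟨(c, d), hcd, PM.pos_ne_neg hc hd⟩) * egen h' =
          egen ⟨(PM.neg a, b), PM.neg_lt_pos ha hb, by rw [PM.neg_neg]; exact hab.ne'⟩ *
            egen ⟨(a, b), hab, PM.pos_ne_neg ha hb⟩ *
            egen ⟨(b, c), hbc, PM.pos_ne_neg hb hc⟩ *
            egen ⟨(c, d), hcd, PM.pos_ne_neg hc hd⟩ := by
        have hl := listprod_absorb
          [⟨(PM.neg a, b), PM.neg_lt_pos ha hb, by rw [PM.neg_neg]; exact hab.ne'⟩,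
           ⟨(a, b), hab, PM.pos_ne_neg ha hb⟩,
           ⟨(b, c), hbc, PM.pos_ne_neg hb hc⟩,
           ⟨(c, d), hcd, PM.pos_ne_neg hc hd⟩] h' (by
            rcases hcase with rfl | rfl | rfl | rfl <;> simp)
        simpa [mul_assoc] using hl
      calc PS (insert h' S) = PS S * egen h' := by rw [PS_insert, mul_comm]
        _ = PS S := by
            conv_lhs => rw [← key]
            rw [mul_assoc, hRabs, key]

end CoreLemma

/-! ### Stage 13: saturation and the bijection -/

section Stage13

variable {n : ℕ}

attribute [local instance] Classical.propDecidable

theorem liftD_PS_val (S : Finset (DGen n)) : (liftD (PS S)).val = dClose (WS S) := by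
  rw [liftD_PS, prodD_val]

theorem saturation : ∀ (k : ℕ) (S : Finset (DGen n)),
    (pairsF (dClose (WS S)) \ S).card ≤ k →
    PS (pairsF (dClose (WS S))) = PS S := by
  intro k
  induction k with
  | zero =>
    intro S hcard
    have hdiff : pairsF (dClose (WS S)) \ S = ∅ := Finset.card_eq_zero.mp (le_antisymm hcard (Nat.zero_le _))
    have hsub : pairsF (dClose (WS S)) ⊆ S := by
      intro g hg
      by_contra hc
      have : g ∈ pairsF (dClose (WS S)) \ S := Finset.mem_sdiff.mpr ⟨hg, hc⟩
      rw [hdiff] at this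
      exact absurd this (Finset.notMem_empty g)
    rw [Finset.Subset.antisymm hsub (S_subset_TS S)]
  | succ k ih =>
    intro S hcard
    by_cases heq : S = pairsF (dClose (WS S))
    · rw [← heq]
    · obtain ⟨h, hT, hS, hPS⟩ := core_step S heq
      have hT' : dClose (WS (insert h S)) = dClose (WS S) := by
        rw [← liftD_PS_val, hPS, liftD_PS_val]
      have hcard' : (pairsF (dClose (WS (insert h S))) \ insert h S).card ≤ k := by
        rw [hT']
        have hss : pairsF (dClose (WS S)) \ insert h S ⊂ pairsF (dClose (WS S)) \ S := by
          constructor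
          · intro w hw
            rw [Finset.mem_sdiff] at hw ⊢
            exact ⟨hw.1, fun hc => hw.2 (Finset.mem_insert_of_mem hc)⟩
          · intro hc
            have h1 : h ∈ pairsF (dClose (WS S)) \ S := Finset.mem_sdiff.mpr ⟨hT, hS⟩
            have h2 := hc h1
            rw [Finset.mem_sdiff] at h2
            exact h2.2 (Finset.mem_insert_self h S)
        have := Finset.card_lt_card hss
        omega
      have := ih (insert h S) hcard'
      rw [hT'] at this
      rw [this, hPS]

theorem liftD_recover (x : PresentedMonoid (DRel n)) :
    PS (pairsF ((liftD x).val)) = x := by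
  induction x using PresentedMonoid.inductionOn with
  | h w =>
    induction w using FreeMonoid.inductionOn' with
    | one =>
      rw [map_one, map_one]
      have hbot : pairsF ((1 : DPart n).val) = (∅ : Finset (DGen n)) := by
        apply Finset.eq_empty_of_forall_notMem
        intro g hg
        rw [mem_pairsF] at hg
        have : g.1.1 = g.1.2 := hg
        exact absurd this (ne_of_lt g.2.1)
      rw [hbot]
      exact Finset.prod_empty
    | of_mul a w ih =>
      rw [map_mul,
        show (PresentedMonoid.mk (DRel n)) (FreeMonoid.of a) = egen a from rfl]
      set y := PresentedMonoid.mk (DRel n) w with hy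
      have h1 : egen a * y = PS (insert a (pairsF ((liftD y).val))) := by
        rw [PS_insert, ih]
      rw [h1]
      have h2 := liftD_PS_val (insert a (pairsF ((liftD y).val)))
      rw [h2]
      exact saturation _ (insert a (pairsF ((liftD y).val))) le_rfl
  
theorem liftD_injective : Function.Injective (liftD (n := n)) := by
  intro x y h
  rw [← liftD_recover x, ← liftD_recover y, h]

end Stage13

/-- For `Dₙ`-partitions `I, J`, the set of common `Dₙ`-coarsenings
has a least element, defining the product `·_D`.  With this product, there is a
bijection `F` from the monoid presented by the generators `e_{i,j}` subject to
(PD1)–(PD5) onto the set `Pₙᴰ` of `Dₙ`-partitions, mapping the identity to `⊥`, each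
generator `e_{i,j}` to `ε_{i,j}`, and products to `·_D` products: `F(x·y)` is the least
`Dₙ`-partition coarser than both `F(x)` and `F(y)`. -/
theorem presentedMonoid_bijection_PnD (n : ℕ) (hn : 2 ≤ n) :
    (∀ I J : Setoid (PM n), IsDPart I → IsDPart J →
        ∃ K₀ : Setoid (PM n), IsLeast {K | IsDPart K ∧ I ≤ K ∧ J ≤ K} K₀) ∧
    ∃ F : PresentedMonoid (DRel n) → Setoid (PM n),
      Function.Injective F ∧
      Set.range F = {I | IsDPart I} ∧
      F 1 = ⊥ ∧
      (∀ a : DGen n, F (PresentedMonoid.of (DRel n) a) = eps a.1.1 a.1.2) ∧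
      ∀ x y : PresentedMonoid (DRel n),
        IsLeast {K | IsDPart K ∧ F x ≤ K ∧ F y ≤ K} (F (x * y)) := by
  constructor
  · intro I J hI hJ
    exact ⟨dClose (I ⊔ J), dClose_isLeast hI hJ⟩
  · refine ⟨fun x => (liftD x).val, ?_, ?_, ?_, ?_, ?_⟩
    · intro x y h
      exact liftD_injective (Subtype.ext h)
    · ext I
      simp only [Set.mem_range, Set.mem_setOf_eq]
      constructor
      · rintro ⟨x, rfl⟩
        exact (liftD x).2
      · intro hI
        exact ⟨PS (pairsF I), by rw [liftD_PS_pairsF hI]⟩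
    · show (liftD (1 : PresentedMonoid (DRel n))).val = ⊥
      rw [map_one]
      rfl
    · intro a
      rfl
    · intro x y
      show IsLeast {K | IsDPart K ∧ (liftD x).val ≤ K ∧ (liftD y).val ≤ K}
        ((liftD (x * y)).val)
      have hxy : (liftD (x * y)).val = dClose ((liftD x).val ⊔ (liftD y).val) := by
        rw [map_mul]
        rfl
      rw [hxy]
      exact dClose_isLeast (liftD x).2 (liftD y).2
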